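/- arXiv:1902.03976 — 4 statements merged into one kernel-verified Lean document; each statement's English description precedes it below -/
import Mathlib

section
/- Let h be a truncation function and let x ↦ K̄(x, ·) assign to each x ∈ ℝ^d a Borel measure on ℝ^d with K̄(x, {0}) = 0 and ∫ (1 ∧ ‖y‖²) K̄(x, dy) < ∞. For each x and ξ ∈ ℝ^d the integral ψ(x, ξ) := ∫ (1 − e^{i⟨y,ξ⟩} + i⟨h(y), ξ⟩) K̄(x, dy) is well defined. If for every ξ ∈ ℝ^d the map x ↦ ψ(x, ξ) is continuous on ℝ^d, then for every m > 0 one has lim_{a→∞} sup_{‖x‖ ≤ m} K̄(x, {y ∈ ℝ^d : ‖y‖ > a}) = 0. -/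
open MeasureTheory Filter Set
open scoped ENNReal RealInnerProductSpace




lemma aux_exp_bound (t : ℝ) :
    ‖Complex.exp (Complex.I * t) - 1 - Complex.I * t‖ ≤ 3 * t ^ 2 := by
  have habs : ‖(Complex.I * t : ℂ)‖ = |t| := by
    simp [norm_mul]
  rcases le_or_gt |t| 1 with ht | ht
  · have h1 : ‖(Complex.I * t : ℂ)‖ ≤ 1 := by rwa [habs]
    have h2 := Complex.norm_exp_sub_one_sub_id_le h1
    rw [habs] at h2
    calc ‖Complex.exp (Complex.I * t) - 1 - Complex.I * t‖ ≤ |t| ^ 2 := h2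
      _ ≤ 3 * t ^ 2 := by rw [_root_.sq_abs]; nlinarith [sq_nonneg t]
  · have h0 : ‖Complex.exp (Complex.I * t)‖ = 1 := by
      rw [mul_comm]
      exact Complex.norm_exp_ofReal_mul_I t
    calc ‖Complex.exp (Complex.I * t) - 1 - Complex.I * t‖
        ≤ ‖Complex.exp (Complex.I * t) - 1‖ + ‖(Complex.I * t : ℂ)‖ := norm_sub_le _ _
      _ ≤ (‖Complex.exp (Complex.I * t)‖ + ‖(1 : ℂ)‖) + ‖(Complex.I * t : ℂ)‖ := by
          gcongr; exact norm_sub_le _ _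
      _ = 2 + |t| := by rw [h0, habs, norm_one]; ring
      _ ≤ 3 * t ^ 2 := by nlinarith [abs_nonneg t, _root_.sq_abs t]

lemma aux_one_sub_cos_bound (t : ℝ) : 1 - Real.cos t ≤ t ^ 2 / 2 := by
  nlinarith [Real.one_sub_sq_div_two_le_cos (x := t)]



section B
variable {d : ℕ}

lemma aux_integrable_min (K : Measure (EuclideanSpace ℝ (Fin d)))
    (hK : ∫⁻ y, ENNReal.ofReal (min 1 (‖y‖ ^ 2)) ∂K < ⊤) :
    Integrable (fun y => min 1 (‖y‖ ^ 2)) K := by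
  refine ⟨(continuous_const.min (continuous_norm.pow 2)).aestronglyMeasurable, ?_⟩
  rw [hasFiniteIntegral_iff_norm]
  have : ∀ y : EuclideanSpace ℝ (Fin d),
      ENNReal.ofReal ‖min 1 (‖y‖ ^ 2)‖ = ENNReal.ofReal (min 1 (‖y‖ ^ 2)) := by
    intro y
    rw [Real.norm_eq_abs, abs_of_nonneg (le_min one_pos.le (sq_nonneg _))]
  simpa only [this] using hK

lemma aux_tail_fin (K : Measure (EuclideanSpace ℝ (Fin d)))
    (hK : ∫⁻ y, ENNReal.ofReal (min 1 (‖y‖ ^ 2)) ∂K < ⊤) {c : ℝ} (hc : 0 < c) :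
    K {y | c ≤ ‖y‖} < ⊤ := by
  set s : Set (EuclideanSpace ℝ (Fin d)) := {y | c ≤ ‖y‖} with hs
  have hsm : MeasurableSet s := (isClosed_le continuous_const continuous_norm).measurableSet
  have hmeas : Measurable fun y : EuclideanSpace ℝ (Fin d) =>
      ENNReal.ofReal (min 1 (‖y‖ ^ 2)) :=
    (continuous_const.min (continuous_norm.pow 2)).measurable.ennreal_ofReal
  have key : ENNReal.ofReal (min 1 (c ^ 2)) * K s ≤ ∫⁻ y, ENNReal.ofReal (min 1 (‖y‖ ^ 2)) ∂K := by
    calc ENNReal.ofReal (min 1 (c ^ 2)) * K s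
        = ∫⁻ _ in s, ENNReal.ofReal (min 1 (c ^ 2)) ∂K := by rw [setLIntegral_const]
      _ ≤ ∫⁻ y in s, ENNReal.ofReal (min 1 (‖y‖ ^ 2)) ∂K := by
          refine setLIntegral_mono hmeas fun y hy => ?_
          exact ENNReal.ofReal_le_ofReal (min_le_min le_rfl (by
            have : c ≤ ‖y‖ := hy
            nlinarith [norm_nonneg y]))
      _ ≤ ∫⁻ y, ENNReal.ofReal (min 1 (‖y‖ ^ 2)) ∂K := setLIntegral_le_lintegral _ _
  have hne : ENNReal.ofReal (min 1 (c ^ 2)) ≠ 0 := by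
    simp only [ne_eq, ENNReal.ofReal_eq_zero, not_le]
    exact lt_min one_pos (by positivity)
  by_contra htop
  rw [not_lt, top_le_iff] at htop
  rw [htop, ENNReal.mul_top hne] at key
  exact absurd (top_le_iff.mp key) hK.ne

lemma aux_g_integrand_integrable (K : Measure (EuclideanSpace ℝ (Fin d)))
    (hK : ∫⁻ y, ENNReal.ofReal (min 1 (‖y‖ ^ 2)) ∂K < ⊤) {R : ℝ} (hR : 0 ≤ R)
    (ξ : EuclideanSpace ℝ (Fin d)) (hξ : ‖ξ‖ ≤ R) :
    Integrable (fun y => 1 - Real.cos ⟪y, ξ⟫) K := by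
  refine Integrable.mono' (((aux_integrable_min K hK).const_mul (max 2 (R ^ 2 / 2))))
    ((continuous_const.sub (Real.continuous_cos.comp
      (continuous_id.inner continuous_const))).aestronglyMeasurable)
    (Eventually.of_forall fun y => ?_)
  have h1 : (0:ℝ) ≤ 1 - Real.cos ⟪y, ξ⟫ := by nlinarith [Real.cos_le_one ⟪y, ξ⟫]
  have h2 : 1 - Real.cos ⟪y, ξ⟫ ≤ 2 := by nlinarith [Real.neg_one_le_cos ⟪y, ξ⟫]
  have h3 : 1 - Real.cos ⟪y, ξ⟫ ≤ ⟪y, ξ⟫ ^ 2 / 2 := aux_one_sub_cos_bound _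
  rw [Real.norm_eq_abs, abs_of_nonneg h1]
  rcases le_or_gt (‖y‖) 1 with hy | hy
  · have hmin : min 1 (‖y‖ ^ 2) = ‖y‖ ^ 2 :=
      min_eq_right (by nlinarith [norm_nonneg y])
    have hinner : |⟪y, ξ⟫| ≤ ‖y‖ * R :=
      (abs_real_inner_le_norm y ξ).trans (by
        have := norm_nonneg y; nlinarith)
    rw [hmin]
    have : ⟪y, ξ⟫ ^ 2 ≤ (‖y‖ * R)^2 := by
      rw [← _root_.sq_abs ⟪y, ξ⟫]; exact pow_le_pow_left₀ (abs_nonneg _) hinner 2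
    have hle : (1 : ℝ) ≤ max 2 (R ^ 2 / 2) * 1 := by
      rw [mul_one]; exact le_trans one_le_two (le_max_left _ _)
    calc 1 - Real.cos ⟪y, ξ⟫ ≤ ⟪y, ξ⟫ ^ 2 / 2 := h3
      _ ≤ (‖y‖ * R) ^ 2 / 2 := by linarith
      _ = R ^ 2 / 2 * ‖y‖ ^ 2 := by ring
      _ ≤ max 2 (R ^ 2 / 2) * ‖y‖ ^ 2 := by
          have := sq_nonneg ‖y‖
          exact mul_le_mul_of_nonneg_right (le_max_right _ _) this
  · have hmin : min 1 (‖y‖ ^ 2) = 1 := min_eq_left (by nlinarith)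
    rw [hmin, mul_one]
    exact h2.trans (le_max_left _ _)

lemma aux_g_cont_xi (K : Measure (EuclideanSpace ℝ (Fin d)))
    (hK : ∫⁻ y, ENNReal.ofReal (min 1 (‖y‖ ^ 2)) ∂K < ⊤) :
    Continuous fun ξ : EuclideanSpace ℝ (Fin d) => ∫ y, (1 - Real.cos ⟪y, ξ⟫) ∂K := by
  rw [continuous_iff_continuousAt]
  intro ξ₀
  have hbound := (aux_integrable_min K hK).const_mul (max 2 ((‖ξ₀‖ + 1) ^ 2 / 2))
  refine continuousAt_of_dominated (Eventually.of_forall fun ξ =>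
      (continuous_const.sub (Real.continuous_cos.comp
        (continuous_id.inner continuous_const))).aestronglyMeasurable) ?_ hbound
    (Eventually.of_forall fun y => ((continuous_const.sub (Real.continuous_cos.comp
      (continuous_const.inner continuous_id))).continuousAt))
  filter_upwards [Metric.ball_mem_nhds ξ₀ one_pos] with ξ hξ
  refine Eventually.of_forall fun y => ?_
  have hξn : ‖ξ‖ ≤ ‖ξ₀‖ + 1 := by
    have := mem_ball_iff_norm.mp hξ
    calc ‖ξ‖ = ‖ξ₀ + (ξ - ξ₀)‖ := by rw [add_sub_cancel]
      _ ≤ ‖ξ₀‖ + ‖ξ - ξ₀‖ := norm_add_le _ _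
      _ ≤ ‖ξ₀‖ + 1 := by linarith
  -- reuse the bound computation from aux_g_integrand_integrable
  have h1 : (0:ℝ) ≤ 1 - Real.cos ⟪y, ξ⟫ := by nlinarith [Real.cos_le_one ⟪y, ξ⟫]
  have h2 : 1 - Real.cos ⟪y, ξ⟫ ≤ 2 := by nlinarith [Real.neg_one_le_cos ⟪y, ξ⟫]
  have h3 : 1 - Real.cos ⟪y, ξ⟫ ≤ ⟪y, ξ⟫ ^ 2 / 2 := aux_one_sub_cos_bound _
  rw [Real.norm_eq_abs, abs_of_nonneg h1]
  rcases le_or_gt (‖y‖) 1 with hy | hy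
  · have hmin : min 1 (‖y‖ ^ 2) = ‖y‖ ^ 2 := min_eq_right (by nlinarith [norm_nonneg y])
    have hinner : |⟪y, ξ⟫| ≤ ‖y‖ * (‖ξ₀‖ + 1) :=
      (abs_real_inner_le_norm y ξ).trans (by have := norm_nonneg y; nlinarith)
    have hsq : ⟪y, ξ⟫ ^ 2 ≤ (‖y‖ * (‖ξ₀‖ + 1))^2 := by
      rw [← _root_.sq_abs ⟪y, ξ⟫]; exact pow_le_pow_left₀ (abs_nonneg _) hinner 2
    rw [hmin]
    calc 1 - Real.cos ⟪y, ξ⟫ ≤ ⟪y, ξ⟫ ^ 2 / 2 := h3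
      _ ≤ (‖y‖ * (‖ξ₀‖ + 1)) ^ 2 / 2 := by linarith
      _ = (‖ξ₀‖ + 1) ^ 2 / 2 * ‖y‖ ^ 2 := by ring
      _ ≤ max 2 ((‖ξ₀‖ + 1) ^ 2 / 2) * ‖y‖ ^ 2 :=
          mul_le_mul_of_nonneg_right (le_max_right _ _) (sq_nonneg _)
  · have hmin : min 1 (‖y‖ ^ 2) = 1 := min_eq_left (by nlinarith)
    rw [hmin, mul_one]
    exact h2.trans (le_max_left _ _)

end B

section C
variable {d : ℕ}

lemma aux_RL (A : Set (EuclideanSpace ℝ (Fin d))) (hA : MeasurableSet A)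
    (hfin : volume A < ⊤) (hpos : 0 < volume A) :
    ∃ R : ℝ, 1 ≤ R ∧ ∀ y : EuclideanSpace ℝ (Fin d), R ≤ ‖y‖ →
      (volume A).toReal / 2 ≤ ∫ ξ in A, (1 - Real.cos ⟪y, ξ⟫) := by
  set vA := (volume A).toReal with hvA
  have hvA_pos : 0 < vA := ENNReal.toReal_pos hpos.ne' hfin.ne
  -- Riemann-Lebesgue
  set c : ℝ := -(1 / (2 * Real.pi)) with hc
  have hc_ne : c ≠ 0 := by
    simp only [hc, ne_eq, neg_eq_zero, one_div, inv_eq_zero, mul_eq_zero]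
    push_neg
    exact ⟨two_ne_zero, Real.pi_ne_zero⟩
  have hRL0 := tendsto_integral_exp_inner_smul_cocompact
    (V := EuclideanSpace ℝ (Fin d)) (A.indicator fun _ => (1 : ℂ))
  have hcomp := hRL0.comp
    ((Homeomorph.smulOfNeZero c hc_ne
      (α := EuclideanSpace ℝ (Fin d))).toCocompactMap.cocompact_tendsto')
  have heq : (fun y : EuclideanSpace ℝ (Fin d) =>
      ∫ v, Real.fourierChar (-⟪v, c • y⟫) • (A.indicator fun _ => (1:ℂ)) v)
      = fun y => ∫ ξ in A, Complex.exp (Complex.I * (⟪y, ξ⟫ : ℝ)) := by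
    funext y
    rw [← integral_indicator hA]
    congr 1
    funext v
    by_cases hv : v ∈ A
    · rw [Set.indicator_of_mem hv, Set.indicator_of_mem hv]
      simp only [Circle.smul_def, smul_eq_mul, mul_one, Real.fourierChar_apply]
      congr 1
      rw [real_inner_smul_right]
      have : 2 * Real.pi * -(c * ⟪v, y⟫) = ⟪v, y⟫ := by
        rw [hc]; field_simp
      rw [this, real_inner_comm, mul_comm]
    · rw [Set.indicator_of_notMem hv, Set.indicator_of_notMem hv, smul_zero]
  have htend : Tendsto (fun y : EuclideanSpace ℝ (Fin d) =>
      ∫ ξ in A, Complex.exp (Complex.I * (⟪y, ξ⟫ : ℝ))) (cocompact _) (nhds 0) := by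
    rw [← heq]
    exact hcomp
  have hev : ∀ᶠ y : EuclideanSpace ℝ (Fin d) in cocompact _,
      ‖∫ ξ in A, Complex.exp (Complex.I * (⟪y, ξ⟫ : ℝ))‖ < vA / 2 := by
    have := Metric.tendsto_nhds.mp htend (vA / 2) (by linarith)
    simpa [dist_zero_right] using this
  obtain ⟨t, htc, hsub⟩ := Filter.mem_cocompact.mp hev
  obtain ⟨R₀, hR₀⟩ := htc.isBounded.subset_closedBall 0
  refine ⟨max 1 (R₀ + 1), le_max_left _ _, fun y hy => ?_⟩
  have hynot : y ∉ t := by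
    intro hyt
    have := hR₀ hyt
    rw [Metric.mem_closedBall, dist_zero_right] at this
    have h2 : R₀ + 1 ≤ ‖y‖ := le_trans (le_max_right 1 (R₀+1)) hy
    linarith
  have hylt : ‖∫ ξ in A, Complex.exp (Complex.I * (⟪y, ξ⟫ : ℝ))‖ < vA / 2 := hsub hynot
  -- now compute the real integral
  haveI : IsFiniteMeasure (volume.restrict A) :=
    ⟨by rw [Measure.restrict_apply_univ]; exact hfin⟩
  have hexp_int : Integrable (fun ξ => Complex.exp (Complex.I * (⟪y, ξ⟫ : ℝ)))
      (volume.restrict A) := by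
    refine Integrable.mono' (integrable_const 1)
      ((Complex.continuous_exp.comp ((continuous_const.mul
        (Complex.continuous_ofReal.comp
          (continuous_const.inner continuous_id))))).aestronglyMeasurable)
      (Filter.Eventually.of_forall fun ξ => ?_)
    rw [mul_comm, Complex.norm_exp_ofReal_mul_I]
  have hcos_int : Integrable (fun ξ => Real.cos ⟪y, ξ⟫) (volume.restrict A) := by
    refine Integrable.mono' (integrable_const 1)
      ((Real.continuous_cos.comp (continuous_const.inner continuous_id)).aestronglyMeasurable)
      (Filter.Eventually.of_forall fun ξ => by
        rw [Real.norm_eq_abs]; exact Real.abs_cos_le_one _)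
  have hsplit : ∫ ξ in A, (1 - Real.cos ⟪y, ξ⟫) = vA - ∫ ξ in A, Real.cos ⟪y, ξ⟫ := by
    rw [integral_sub (integrable_const 1) hcos_int]
    congr 1
    rw [integral_const, measureReal_restrict_apply_univ, smul_eq_mul, mul_one, measureReal_def]
  have hre : ∫ ξ in A, Real.cos ⟪y, ξ⟫
      = (∫ ξ in A, Complex.exp (Complex.I * (⟪y, ξ⟫ : ℝ))).re := by
    rw [show (∫ ξ in A, Complex.exp (Complex.I * (⟪y, ξ⟫ : ℝ))).re
        = RCLike.re (∫ ξ in A, Complex.exp (Complex.I * (⟪y, ξ⟫ : ℝ))) from rfl,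
      ← integral_re hexp_int]
    congr 1
    funext ξ
    rw [show RCLike.re (Complex.exp (Complex.I * (⟪y, ξ⟫ : ℝ)))
        = (Complex.exp (Complex.I * (⟪y, ξ⟫ : ℝ))).re from rfl]
    rw [mul_comm, Complex.exp_ofReal_mul_I_re]
  have habs : (∫ ξ in A, Complex.exp (Complex.I * (⟪y, ξ⟫ : ℝ))).re ≤ vA / 2 := by
    calc (∫ ξ in A, Complex.exp (Complex.I * (⟪y, ξ⟫ : ℝ))).re
        ≤ |(∫ ξ in A, Complex.exp (Complex.I * (⟪y, ξ⟫ : ℝ))).re| := le_abs_self _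
      _ ≤ ‖∫ ξ in A, Complex.exp (Complex.I * (⟪y, ξ⟫ : ℝ))‖ := Complex.abs_re_le_norm _
      _ ≤ vA / 2 := hylt.le
  rw [hsplit, hre]
  linarith

end C

section D
variable {d : ℕ}

lemma aux_key (K : Measure (EuclideanSpace ℝ (Fin d)))
    (hK : ∫⁻ y, ENNReal.ofReal (min 1 (‖y‖ ^ 2)) ∂K < ⊤)
    (A : Set (EuclideanSpace ℝ (Fin d))) (hA : MeasurableSet A) (hAfin : volume A < ⊤)
    {R : ℝ} (hR : 1 ≤ R)
    (hRL : ∀ y : EuclideanSpace ℝ (Fin d), R ≤ ‖y‖ →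
      (volume A).toReal / 2 ≤ ∫ ξ in A, (1 - Real.cos ⟪y, ξ⟫))
    (hgint : IntegrableOn (fun ξ => ∫ y, (1 - Real.cos ⟪y, ξ⟫) ∂K) A) :
    (volume A).toReal / 2 * (K {y | R ≤ ‖y‖}).toReal
      ≤ ∫ ξ in A, ∫ y, (1 - Real.cos ⟪y, ξ⟫) ∂K := by
  set s : Set (EuclideanSpace ℝ (Fin d)) := {y | R ≤ ‖y‖} with hs_def
  have hs : MeasurableSet s := (isClosed_le continuous_const continuous_norm).measurableSet
  set μR := K.restrict s with hμR_def
  haveI hfinR : IsFiniteMeasure μR :=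
    ⟨by rw [hμR_def, Measure.restrict_apply_univ]
        exact aux_tail_fin K hK (lt_of_lt_of_le one_pos hR)⟩
  haveI hfinA : IsFiniteMeasure (volume.restrict A) :=
    ⟨by rw [Measure.restrict_apply_univ]; exact hAfin⟩
  have hnonneg : ∀ t : ℝ, (0:ℝ) ≤ 1 - Real.cos t := fun t => by
    nlinarith [Real.cos_le_one t]
  have hbnd : ∀ t : ℝ, ‖1 - Real.cos t‖ ≤ 2 := fun t => by
    rw [Real.norm_eq_abs, abs_of_nonneg (hnonneg t)]
    nlinarith [Real.neg_one_le_cos t]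
  -- step 1 : pointwise comparison
  have step1 : ∀ ξ : EuclideanSpace ℝ (Fin d),
      ∫ y, (1 - Real.cos ⟪y, ξ⟫) ∂μR ≤ ∫ y, (1 - Real.cos ⟪y, ξ⟫) ∂K := by
    intro ξ
    exact integral_mono_measure Measure.restrict_le_self
      (Filter.Eventually.of_forall fun y => hnonneg _)
      (aux_g_integrand_integrable K hK (norm_nonneg ξ) ξ le_rfl)
  -- F is continuous, hence integrable on A
  have hFcont : Continuous fun ξ : EuclideanSpace ℝ (Fin d) =>
      ∫ y, (1 - Real.cos ⟪y, ξ⟫) ∂μR := by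
    refine continuous_of_dominated (fun ξ => (continuous_const.sub (Real.continuous_cos.comp
        (continuous_id.inner continuous_const))).aestronglyMeasurable)
      (fun ξ => Filter.Eventually.of_forall fun y => hbnd _) (integrable_const 2)
      (Filter.Eventually.of_forall fun y => continuous_const.sub (Real.continuous_cos.comp
        (continuous_const.inner continuous_id)))
  have hFint : IntegrableOn (fun ξ : EuclideanSpace ℝ (Fin d) =>
      ∫ y, (1 - Real.cos ⟪y, ξ⟫) ∂μR) A := by
    refine Integrable.mono' (integrable_const (2 * (μR Set.univ).toReal))
      hFcont.aestronglyMeasurable (Filter.Eventually.of_forall fun ξ => ?_)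
    exact norm_integral_le_of_norm_le_const (Filter.Eventually.of_forall fun y => hbnd _)
  have step2 : ∫ ξ in A, (∫ y, (1 - Real.cos ⟪y, ξ⟫) ∂μR)
      ≤ ∫ ξ in A, ∫ y, (1 - Real.cos ⟪y, ξ⟫) ∂K :=
    setIntegral_mono_on hFint hgint hA (fun ξ _ => step1 ξ)
  -- swap
  have hswap : ∫ ξ in A, (∫ y, (1 - Real.cos ⟪y, ξ⟫) ∂μR)
      = ∫ y, (∫ ξ in A, (1 - Real.cos ⟪y, ξ⟫)) ∂μR := by
    refine integral_integral_swap ?_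
    refine Integrable.mono' (integrable_const 2)
      ((continuous_const.sub (Real.continuous_cos.comp
        (continuous_snd.inner continuous_fst))).aestronglyMeasurable)
      (Filter.Eventually.of_forall fun p => hbnd _)
  -- lower bound for the inner integral
  have hφint : Integrable (fun y : EuclideanSpace ℝ (Fin d) =>
      ∫ ξ in A, (1 - Real.cos ⟪y, ξ⟫)) μR := by
    have hφcont : Continuous fun y : EuclideanSpace ℝ (Fin d) =>
        ∫ ξ in A, (1 - Real.cos ⟪y, ξ⟫) := by
      refine continuous_of_dominated (fun y => (continuous_const.sub (Real.continuous_cos.comp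
          (continuous_const.inner continuous_id))).aestronglyMeasurable)
        (fun y => Filter.Eventually.of_forall fun ξ => hbnd _) (integrable_const 2)
        (Filter.Eventually.of_forall fun ξ => continuous_const.sub (Real.continuous_cos.comp
          (continuous_id.inner continuous_const)))
    refine Integrable.mono' (integrable_const (2 * (volume.restrict A Set.univ).toReal))
      hφcont.aestronglyMeasurable (Filter.Eventually.of_forall fun y => ?_)
    exact norm_integral_le_of_norm_le_const (Filter.Eventually.of_forall fun ξ => hbnd _)
  have step4 : ∫ y, ((volume A).toReal / 2 : ℝ) ∂μR
      ≤ ∫ y, (∫ ξ in A, (1 - Real.cos ⟪y, ξ⟫)) ∂μR := by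
    refine integral_mono_ae (integrable_const _) hφint ?_
    rw [hμR_def]
    exact ae_restrict_of_forall_mem hs fun y hy => hRL y hy
  have step5 : ∫ y, ((volume A).toReal / 2 : ℝ) ∂μR
      = (volume A).toReal / 2 * (K s).toReal := by
    rw [integral_const, hμR_def, measureReal_restrict_apply_univ, smul_eq_mul, mul_comm, measureReal_def]
  calc (volume A).toReal / 2 * (K s).toReal
      = ∫ y, ((volume A).toReal / 2 : ℝ) ∂μR := step5.symm
    _ ≤ ∫ y, (∫ ξ in A, (1 - Real.cos ⟪y, ξ⟫)) ∂μR := step4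
    _ = ∫ ξ in A, (∫ y, (1 - Real.cos ⟪y, ξ⟫) ∂μR) := hswap.symm
    _ ≤ ∫ ξ in A, ∫ y, (1 - Real.cos ⟪y, ξ⟫) ∂K := step2

end D

section E
variable {d : ℕ}

lemma aux_phi_bound (h : EuclideanSpace ℝ (Fin d) → EuclideanSpace ℝ (Fin d))
    (hh_bdd : ∃ C : ℝ, ∀ y, ‖h y‖ ≤ C)
    (hh_id : ∀ᶠ y in nhds (0 : EuclideanSpace ℝ (Fin d)), h y = y)
    (ξ : EuclideanSpace ℝ (Fin d)) :
    ∃ M : ℝ, 0 ≤ M ∧ ∀ y,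
      ‖(1 - Complex.exp (Complex.I * (⟪y, ξ⟫ : ℝ)) + Complex.I * (⟪h y, ξ⟫ : ℝ) : ℂ)‖
        ≤ M * min 1 (‖y‖ ^ 2) := by
  obtain ⟨C₀, hC₀⟩ := hh_bdd
  set C := max C₀ 0 with hC
  have hC_nonneg : (0:ℝ) ≤ C := le_max_right _ _
  have hCb : ∀ y, ‖h y‖ ≤ C := fun y => (hC₀ y).trans (le_max_left _ _)
  obtain ⟨δ₀, hδ₀pos, hδ₀⟩ := Metric.eventually_nhds_iff.mp hh_id
  set δ := min δ₀ 1 with hδ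
  have hδpos : 0 < δ := lt_min hδ₀pos one_pos
  have hδle1 : δ ≤ 1 := min_le_right _ _
  refine ⟨max (3 * ‖ξ‖ ^ 2) ((2 + C * ‖ξ‖) / δ ^ 2),
    le_max_of_le_left (by positivity), fun y => ?_⟩
  have hmin_nonneg : (0:ℝ) ≤ min 1 (‖y‖ ^ 2) := le_min one_pos.le (sq_nonneg _)
  rcases lt_or_ge ‖y‖ δ with hy | hy
  · have hid : h y = y := hδ₀ (show dist y 0 < δ₀ by
      rw [dist_zero_right]; exact hy.trans_le (min_le_left _ _))
    have heq : (1 - Complex.exp (Complex.I * (⟪y, ξ⟫ : ℝ)) +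
        Complex.I * (⟪h y, ξ⟫ : ℝ) : ℂ)
        = -(Complex.exp (Complex.I * (⟪y, ξ⟫ : ℝ)) - 1 - Complex.I * (⟪y, ξ⟫ : ℝ)) := by
      rw [hid]; ring
    rw [heq, norm_neg]
    have h3 := aux_exp_bound ⟪y, ξ⟫
    have ht : ⟪y, ξ⟫ ^ 2 ≤ ‖y‖ ^ 2 * ‖ξ‖ ^ 2 := by
      rw [← _root_.sq_abs ⟪y, ξ⟫, ← mul_pow]
      exact pow_le_pow_left₀ (abs_nonneg _) (abs_real_inner_le_norm y ξ) 2
    have hmin : min 1 (‖y‖ ^ 2) = ‖y‖ ^ 2 := min_eq_right (by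
      have h1 : ‖y‖ ≤ 1 := hy.le.trans hδle1
      nlinarith [norm_nonneg y])
    calc ‖Complex.exp (Complex.I * (⟪y, ξ⟫ : ℝ)) - 1 - Complex.I * (⟪y, ξ⟫ : ℝ)‖
        ≤ 3 * ⟪y, ξ⟫ ^ 2 := h3
      _ ≤ 3 * ‖ξ‖ ^ 2 * ‖y‖ ^ 2 := by nlinarith
      _ = 3 * ‖ξ‖ ^ 2 * min 1 (‖y‖ ^ 2) := by rw [hmin]
      _ ≤ max (3 * ‖ξ‖ ^ 2) ((2 + C * ‖ξ‖) / δ ^ 2) * min 1 (‖y‖ ^ 2) :=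
          mul_le_mul_of_nonneg_right (le_max_left _ _) hmin_nonneg
  · have hnorm1 : ‖Complex.exp (Complex.I * (⟪y, ξ⟫ : ℝ))‖ = 1 := by
      rw [mul_comm]; exact Complex.norm_exp_ofReal_mul_I _
    have hb1 : ‖(1 - Complex.exp (Complex.I * (⟪y, ξ⟫ : ℝ)) +
        Complex.I * (⟪h y, ξ⟫ : ℝ) : ℂ)‖ ≤ 2 + C * ‖ξ‖ := by
      calc ‖(1 - Complex.exp (Complex.I * (⟪y, ξ⟫ : ℝ)) +
          Complex.I * (⟪h y, ξ⟫ : ℝ) : ℂ)‖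
          ≤ ‖(1 - Complex.exp (Complex.I * (⟪y, ξ⟫ : ℝ)) : ℂ)‖ +
            ‖(Complex.I * (⟪h y, ξ⟫ : ℝ) : ℂ)‖ := norm_add_le _ _
        _ ≤ (‖(1:ℂ)‖ + ‖Complex.exp (Complex.I * (⟪y, ξ⟫ : ℝ))‖) +
            ‖(Complex.I * (⟪h y, ξ⟫ : ℝ) : ℂ)‖ := by gcongr; exact norm_sub_le _ _
        _ = 2 + |⟪h y, ξ⟫| := by
            rw [norm_one, hnorm1, norm_mul, Complex.norm_I, one_mul, Complex.norm_real,
              Real.norm_eq_abs]; ring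
        _ ≤ 2 + C * ‖ξ‖ := by
            have h1 := (abs_real_inner_le_norm (h y) ξ).trans
              (mul_le_mul_of_nonneg_right (hCb y) (norm_nonneg ξ))
            linarith
    have hδsq : δ ^ 2 ≤ min 1 (‖y‖ ^ 2) := le_min (by nlinarith) (by nlinarith [norm_nonneg y])
    calc ‖(1 - Complex.exp (Complex.I * (⟪y, ξ⟫ : ℝ)) +
        Complex.I * (⟪h y, ξ⟫ : ℝ) : ℂ)‖
        ≤ 2 + C * ‖ξ‖ := hb1
      _ = (2 + C * ‖ξ‖) / δ ^ 2 * δ ^ 2 := by field_simp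
      _ ≤ (2 + C * ‖ξ‖) / δ ^ 2 * min 1 (‖y‖ ^ 2) := by
          refine mul_le_mul_of_nonneg_left hδsq (by positivity)
      _ ≤ max (3 * ‖ξ‖ ^ 2) ((2 + C * ‖ξ‖) / δ ^ 2) * min 1 (‖y‖ ^ 2) :=
          mul_le_mul_of_nonneg_right (le_max_right _ _) hmin_nonneg

lemma aux_phi_integrable (h : EuclideanSpace ℝ (Fin d) → EuclideanSpace ℝ (Fin d))
    (hh_cont : Continuous h)
    (hh_bdd : ∃ C : ℝ, ∀ y, ‖h y‖ ≤ C)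
    (hh_id : ∀ᶠ y in nhds (0 : EuclideanSpace ℝ (Fin d)), h y = y)
    (K : Measure (EuclideanSpace ℝ (Fin d)))
    (hK : ∫⁻ y, ENNReal.ofReal (min 1 (‖y‖ ^ 2)) ∂K < ⊤)
    (ξ : EuclideanSpace ℝ (Fin d)) :
    Integrable (fun y =>
      (1 - Complex.exp (Complex.I * (⟪y, ξ⟫ : ℝ)) + Complex.I * (⟪h y, ξ⟫ : ℝ) : ℂ)) K := by
  obtain ⟨M, hM0, hM⟩ := aux_phi_bound h hh_bdd hh_id ξ
  have hcontφ : Continuous fun y : EuclideanSpace ℝ (Fin d) =>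
      (1 - Complex.exp (Complex.I * (⟪y, ξ⟫ : ℝ)) + Complex.I * (⟪h y, ξ⟫ : ℝ) : ℂ) := by
    refine ((continuous_const.sub (Complex.continuous_exp.comp
      (continuous_const.mul (Complex.continuous_ofReal.comp
        (continuous_id.inner continuous_const))))).add
      (continuous_const.mul (Complex.continuous_ofReal.comp
        ((hh_cont.inner continuous_const)))))
  exact Integrable.mono' ((aux_integrable_min K hK).const_mul M)
    hcontφ.aestronglyMeasurable (Filter.Eventually.of_forall hM)

lemma aux_g_eq_re (h : EuclideanSpace ℝ (Fin d) → EuclideanSpace ℝ (Fin d))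
    (K : Measure (EuclideanSpace ℝ (Fin d)))
    (ξ : EuclideanSpace ℝ (Fin d))
    (hint : Integrable (fun y =>
      (1 - Complex.exp (Complex.I * (⟪y, ξ⟫ : ℝ)) + Complex.I * (⟪h y, ξ⟫ : ℝ) : ℂ)) K) :
    ∫ y, (1 - Real.cos ⟪y, ξ⟫) ∂K
      = (∫ y, (1 - Complex.exp (Complex.I * (⟪y, ξ⟫ : ℝ))
          + Complex.I * (⟪h y, ξ⟫ : ℝ) : ℂ) ∂K).re := by
  rw [show (∫ y, (1 - Complex.exp (Complex.I * (⟪y, ξ⟫ : ℝ))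
      + Complex.I * (⟪h y, ξ⟫ : ℝ) : ℂ) ∂K).re
      = RCLike.re (∫ y, (1 - Complex.exp (Complex.I * (⟪y, ξ⟫ : ℝ))
      + Complex.I * (⟪h y, ξ⟫ : ℝ) : ℂ) ∂K) from rfl, ← integral_re hint]
  congr 1
  funext y
  rw [show RCLike.re (1 - Complex.exp (Complex.I * (⟪y, ξ⟫ : ℝ))
      + Complex.I * (⟪h y, ξ⟫ : ℝ) : ℂ)
      = (1 - Complex.exp (Complex.I * (⟪y, ξ⟫ : ℝ))
      + Complex.I * (⟪h y, ξ⟫ : ℝ) : ℂ).re from rfl]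
  have h2 : (Complex.exp (Complex.I * (⟪y, ξ⟫ : ℝ))).re = Real.cos ⟪y, ξ⟫ := by
    rw [mul_comm, Complex.exp_ofReal_mul_I_re]
  have h1 : (Complex.I * ((⟪h y, ξ⟫ : ℝ) : ℂ)).re = 0 := by
    rw [Complex.mul_re, Complex.I_re, Complex.I_im, Complex.ofReal_re, Complex.ofReal_im]
    ring
  rw [Complex.add_re, Complex.sub_re, Complex.one_re, h2, h1, add_zero]

end E

/-- Let `h` be a truncation function (bounded, continuous, equal to the identity near the
origin) and `K̄` a kernel of Lévy measures on `ℝ^d`. If for every `ξ` the map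
`x ↦ ∫ (1 − e^{i⟨y,ξ⟩} + i⟨h(y),ξ⟩) K̄(x, dy)` is continuous, then for every `m > 0`,
`lim_{a→∞} sup_{‖x‖≤m} K̄(x, {y : ‖y‖ > a}) = 0`. -/
theorem stmt1 {d : ℕ}
    (h : EuclideanSpace ℝ (Fin d) → EuclideanSpace ℝ (Fin d))
    (hh_cont : Continuous h) (hh_bdd : ∃ C : ℝ, ∀ y, ‖h y‖ ≤ C)
    (hh_id : ∀ᶠ y in nhds (0 : EuclideanSpace ℝ (Fin d)), h y = y)
    (K : EuclideanSpace ℝ (Fin d) → Measure (EuclideanSpace ℝ (Fin d)))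
    (hK0 : ∀ x, K x {0} = 0)
    (hKint : ∀ x, ∫⁻ y, ENNReal.ofReal (min 1 (‖y‖ ^ 2)) ∂(K x) < ⊤)
    (hcont : ∀ ξ : EuclideanSpace ℝ (Fin d),
      Continuous fun x =>
        ∫ y, (1 - Complex.exp (Complex.I * (⟪y, ξ⟫ : ℝ)) +
          Complex.I * (⟪h y, ξ⟫ : ℝ)) ∂(K x)) :
    ∀ m : ℝ, 0 < m →
      Tendsto (fun a : ℝ => ⨆ x : {x : EuclideanSpace ℝ (Fin d) // ‖x‖ ≤ m},
          K x.1 {y | a < ‖y‖}) atTop (nhds 0) := by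
  intro m hm
  classical
  -- the real function g
  set g : EuclideanSpace ℝ (Fin d) → EuclideanSpace ℝ (Fin d) → ℝ :=
    fun x ξ => ∫ y, (1 - Real.cos ⟪y, ξ⟫) ∂(K x) with hg_def
  have hg_eq : ∀ x ξ, g x ξ = (∫ y, (1 - Complex.exp (Complex.I * (⟪y, ξ⟫ : ℝ))
      + Complex.I * (⟪h y, ξ⟫ : ℝ) : ℂ) ∂(K x)).re := fun x ξ =>
    aux_g_eq_re h (K x) ξ (aux_phi_integrable h hh_cont hh_bdd hh_id (K x) (hKint x) ξ)
  have hg_contx : ∀ ξ, Continuous fun x => g x ξ := by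
    intro ξ
    have : (fun x => g x ξ) = fun x => (∫ y, (1 - Complex.exp (Complex.I * (⟪y, ξ⟫ : ℝ))
        + Complex.I * (⟪h y, ξ⟫ : ℝ) : ℂ) ∂(K x)).re := funext fun x => hg_eq x ξ
    rw [this]
    exact Complex.continuous_re.comp (hcont ξ)
  have hg_nonneg : ∀ x ξ, 0 ≤ g x ξ := by
    intro x ξ
    refine integral_nonneg fun y => ?_
    show (0:ℝ) ≤ 1 - Real.cos ⟪y, ξ⟫
    nlinarith [Real.cos_le_one ⟪y, ξ⟫]
  have hg_zero : ∀ x, g x 0 = 0 := by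
    intro x
    rw [hg_def]
    simp only [inner_zero_right, Real.cos_zero, sub_self]
    exact integral_zero _ _
  have hg_contξ : ∀ x, Continuous (g x) := fun x => aux_g_cont_xi (K x) (hKint x)
  -- reduction
  rw [ENNReal.tendsto_nhds_zero]
  intro ε hε
  have hanti : ∀ a b : ℝ, a ≤ b →
      (⨆ x : {x : EuclideanSpace ℝ (Fin d) // ‖x‖ ≤ m}, K x.1 {y | b < ‖y‖})
        ≤ ⨆ x : {x : EuclideanSpace ℝ (Fin d) // ‖x‖ ≤ m}, K x.1 {y | a < ‖y‖} :=
    fun a b hab => iSup_mono fun x => measure_mono fun y hy => lt_of_le_of_lt hab hy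
  suffices hex : ∃ a₀ : ℝ, (⨆ x : {x : EuclideanSpace ℝ (Fin d) // ‖x‖ ≤ m},
      K x.1 {y | a₀ < ‖y‖}) ≤ min ε 1 by
    obtain ⟨a₀, ha₀⟩ := hex
    filter_upwards [eventually_ge_atTop a₀] with a ha
    exact le_trans (le_trans (hanti a₀ a ha) ha₀) (min_le_left _ _)
  by_contra hcon
  push_neg at hcon
  set ε' : ℝ≥0∞ := min ε 1 with hε'
  have hε'pos : 0 < ε' := lt_min hε zero_lt_one
  have hε'top : ε' ≠ ⊤ := ((min_le_right ε 1).trans_lt (by norm_num)).ne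
  set εr : ℝ := ε'.toReal with hεr_def
  have hεr : 0 < εr := ENNReal.toReal_pos hε'pos.ne' hε'top
  have hchoice : ∀ n : ℕ, ∃ x : EuclideanSpace ℝ (Fin d),
      ‖x‖ ≤ m ∧ ε' < K x {y | (n : ℝ) < ‖y‖} := by
    intro n
    obtain ⟨x, hx⟩ := lt_iSup_iff.mp (hcon n)
    exact ⟨x.1, x.2, hx⟩
  choose u hum hur using hchoice
  have humem : ∀ n, u n ∈ Metric.closedBall (0 : EuclideanSpace ℝ (Fin d)) m := fun n => by
    rw [Metric.mem_closedBall, dist_zero_right]; exact hum n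
  obtain ⟨xb, -, φ, hφmono, hφtend⟩ :=
    (isCompact_closedBall (0 : EuclideanSpace ℝ (Fin d)) m).tendsto_subseq humem
  set v : ℕ → EuclideanSpace ℝ (Fin d) := u ∘ φ with hv_def
  have htend : ∀ ξ, Tendsto (fun k => g (v k) ξ) atTop (nhds (g xb ξ)) := fun ξ =>
    ((hg_contx ξ).tendsto xb).comp hφtend
  -- δ from continuity of g xb at 0
  obtain ⟨δ, hδpos, hδ⟩ := Metric.continuousAt_iff.mp ((hg_contξ xb).continuousAt (x := 0))
    (εr / 4) (by positivity)
  have hδ' : ∀ ξ : EuclideanSpace ℝ (Fin d), ξ ∈ Metric.ball (0:EuclideanSpace ℝ (Fin d)) δ →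
      g xb ξ ≤ εr / 4 := by
    intro ξ hξ
    have h2 := hδ (Metric.mem_ball.mp hξ)
    rw [hg_zero xb, dist_zero_right, Real.norm_eq_abs, abs_of_nonneg (hg_nonneg xb ξ)] at h2
    exact h2.le
  -- the dominating function G
  set G : EuclideanSpace ℝ (Fin d) → ℝ≥0∞ := fun ξ =>
    max (ENNReal.ofReal (g xb ξ)) (⨆ k, ENNReal.ofReal (g (v k) ξ)) with hG_def
  have hGmeas : Measurable G :=
    Measurable.max ((hg_contξ xb).measurable.ennreal_ofReal)
      (Measurable.iSup fun k => (hg_contξ (v k)).measurable.ennreal_ofReal)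
  have hGfin : ∀ ξ, G ξ ≠ ⊤ := by
    intro ξ
    obtain ⟨B, hB⟩ := (htend ξ).bddAbove_range
    refine (max_lt (ENNReal.ofReal_lt_top) (lt_of_le_of_lt (iSup_le fun k =>
      ENNReal.ofReal_le_ofReal (hB ⟨k, rfl⟩)) ENNReal.ofReal_lt_top)).ne
  set Aset : ℕ → Set (EuclideanSpace ℝ (Fin d)) :=
    fun N => Metric.ball 0 δ ∩ {ξ | G ξ ≤ N} with hAset_def
  have hAmeas : ∀ N, MeasurableSet (Aset N) := fun N =>
    measurableSet_ball.inter (hGmeas measurableSet_Iic)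
  have hUnion : ⋃ N, Aset N = Metric.ball (0:EuclideanSpace ℝ (Fin d)) δ := by
    apply subset_antisymm
    · exact iUnion_subset fun N => inter_subset_left
    · intro ξ hξ
      obtain ⟨N, hN⟩ := ENNReal.exists_nat_gt (hGfin ξ)
      exact mem_iUnion.mpr ⟨N, hξ, hN.le⟩
  have hballpos : 0 < volume (Metric.ball (0 : EuclideanSpace ℝ (Fin d)) δ) :=
    Metric.measure_ball_pos _ _ hδpos
  have hNex : ∃ N : ℕ, volume (Aset N) ≠ 0 := by
    by_contra hall
    push_neg at hall
    have h0 := measure_iUnion_null fun N => hall N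
    rw [hUnion] at h0
    exact hballpos.ne' h0
  obtain ⟨N, hN⟩ := hNex
  set A : Set (EuclideanSpace ℝ (Fin d)) := Aset N with hA_def
  have hA_meas : MeasurableSet A := hAmeas N
  have hA_pos : 0 < volume A := pos_iff_ne_zero.mpr hN
  have hA_fin : volume A < ⊤ :=
    (measure_mono inter_subset_left).trans_lt measure_ball_lt_top
  haveI : IsFiniteMeasure (volume.restrict A) :=
    ⟨by rw [Measure.restrict_apply_univ]; exact hA_fin⟩
  have hA_bd : ∀ ξ ∈ A, g xb ξ ≤ N ∧ ∀ k, g (v k) ξ ≤ N := by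
    intro ξ hξ
    have hGξ : G ξ ≤ N := hξ.2
    constructor
    · have h1 : ENNReal.ofReal (g xb ξ) ≤ (N : ℝ≥0∞) := (le_max_left _ _).trans hGξ
      rw [show ((N : ℕ) : ℝ≥0∞) = ENNReal.ofReal (N : ℝ) by
        rw [ENNReal.ofReal_natCast]] at h1
      exact (ENNReal.ofReal_le_ofReal_iff (Nat.cast_nonneg N)).mp h1
    · intro k
      have h1 : ENNReal.ofReal (g (v k) ξ) ≤ (N : ℝ≥0∞) :=
        ((le_iSup (fun k => ENNReal.ofReal (g (v k) ξ)) k).trans (le_max_right _ _)).trans hGξ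
      rw [show ((N : ℕ) : ℝ≥0∞) = ENNReal.ofReal (N : ℝ) by
        rw [ENNReal.ofReal_natCast]] at h1
      exact (ENNReal.ofReal_le_ofReal_iff (Nat.cast_nonneg N)).mp h1
  have hgint : ∀ w : EuclideanSpace ℝ (Fin d), (∀ ξ ∈ A, g w ξ ≤ N) →
      IntegrableOn (fun ξ => g w ξ) A := by
    intro w hw
    refine Integrable.mono' (integrable_const (N : ℝ))
      (hg_contξ w).aestronglyMeasurable.restrict ?_
    refine ae_restrict_of_forall_mem hA_meas fun ξ hξ => ?_
    rw [Real.norm_eq_abs, abs_of_nonneg (hg_nonneg w ξ)]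
    exact hw ξ hξ
  -- dominated convergence
  have hlim : Tendsto (fun k => ∫ ξ in A, g (v k) ξ) atTop (nhds (∫ ξ in A, g xb ξ)) := by
    refine tendsto_integral_of_dominated_convergence (fun _ => (N : ℝ))
      (fun k => (hg_contξ (v k)).aestronglyMeasurable.restrict)
      (integrable_const _) (fun k => ae_restrict_of_forall_mem hA_meas fun ξ hξ => ?_)
      (Filter.Eventually.of_forall fun ξ => htend ξ)
    rw [Real.norm_eq_abs, abs_of_nonneg (hg_nonneg (v k) ξ)]
    exact (hA_bd ξ hξ).2 k
  have hintxb : ∫ ξ in A, g xb ξ ≤ εr / 4 * (volume A).toReal := by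
    calc ∫ ξ in A, g xb ξ ≤ ∫ _ξ in A, (εr / 4 : ℝ) := by
          refine setIntegral_mono_on (hgint xb fun ξ hξ => (hA_bd ξ hξ).1)
            (integrable_const _) hA_meas (fun ξ hξ => hδ' ξ hξ.1)
      _ = εr / 4 * (volume A).toReal := by
          rw [setIntegral_const, smul_eq_mul, mul_comm, measureReal_def]
  -- Riemann-Lebesgue and key inequality
  obtain ⟨R, hR1, hRL⟩ := aux_RL A hA_meas hA_fin hA_pos
  have hkey : ∀ k, (volume A).toReal / 2 * (K (v k) {y | R ≤ ‖y‖}).toReal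
      ≤ ∫ ξ in A, g (v k) ξ := fun k =>
    aux_key (K (v k)) (hKint (v k)) A hA_meas hA_fin hR1 hRL
      (hgint (v k) fun ξ hξ => (hA_bd ξ hξ).2 k)
  have hev : ∀ᶠ k in atTop, (volume A).toReal / 2 * εr ≤ ∫ ξ in A, g (v k) ξ := by
    filter_upwards [eventually_ge_atTop ⌈R⌉₊] with k hk
    have hφk : R ≤ (φ k : ℝ) := by
      calc R ≤ (⌈R⌉₊ : ℝ) := Nat.le_ceil R
        _ ≤ (k : ℝ) := Nat.cast_le.mpr hk
        _ ≤ (φ k : ℝ) := Nat.cast_le.mpr (hφmono.le_apply)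
    have hsub2 : {y : EuclideanSpace ℝ (Fin d) | (φ k : ℝ) < ‖y‖} ⊆ {y | R ≤ ‖y‖} :=
      fun y hy => le_of_lt (lt_of_le_of_lt hφk hy)
    have h1 : ε' < K (v k) {y | R ≤ ‖y‖} :=
      lt_of_lt_of_le (hur (φ k)) (measure_mono hsub2)
    have hfin2 : K (v k) {y | R ≤ ‖y‖} < ⊤ :=
      aux_tail_fin (K (v k)) (hKint (v k)) (lt_of_lt_of_le one_pos hR1)
    have h2 : εr ≤ (K (v k) {y | R ≤ ‖y‖}).toReal :=
      ((ENNReal.toReal_lt_toReal hε'top hfin2.ne).mpr h1).le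
    calc (volume A).toReal / 2 * εr
        ≤ (volume A).toReal / 2 * (K (v k) {y | R ≤ ‖y‖}).toReal := by
          refine mul_le_mul_of_nonneg_left h2 (by positivity)
      _ ≤ ∫ ξ in A, g (v k) ξ := hkey k
  have hfinal : (volume A).toReal / 2 * εr ≤ ∫ ξ in A, g xb ξ := ge_of_tendsto hlim hev
  have hvA_pos : 0 < (volume A).toReal := ENNReal.toReal_pos hA_pos.ne' hA_fin.ne
  nlinarith [hfinal, hintxb, hvA_pos, hεr]
end

section
/- Let α and (α_n)_{n∈ℕ} be càdlàg functions [0,∞) → ℝ^d and suppose there exist time changes λ_n such that sup_{s≥0} |λ_n(s) − s| → 0 and sup_{s∈[0,N]} ‖α_n(λ_n(s)) − α(s)‖ → 0 as n → ∞ for every N ∈ ℕ. If t > 0 satisfies α(t) = α(t-), then X*_t(α_n) → X*_t(α) as n → ∞; consequently, for every continuous function φ : ℝ → ℝ one has φ(X*_t(α_n)) → φ(X*_t(α)). -/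
open MeasureTheory Filter Set Topology
open scoped ENNReal

noncomputable section

/-- A function `f : ℝ → E` is càdlàg (on `[0,∞)`) if it is right-continuous at every
`t ≥ 0` and has a left limit at every `t > 0`. -/
def Cadlag {E : Type*} [NormedAddCommGroup E] (f : ℝ → E) : Prop :=
  (∀ t : ℝ, 0 ≤ t → ContinuousWithinAt f (Ici t) t) ∧
  (∀ t : ℝ, 0 < t → ∃ l, Tendsto f (nhdsWithin t (Iio t)) (nhds l))

/-- The left-limit function `t ↦ f(t-)`, with the convention `f(0-) = f(0)`. -/
def lL {E : Type*} [NormedAddCommGroup E] (f : ℝ → E) (t : ℝ) : E :=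
  if t ≤ 0 then f 0 else Function.leftLim f t

/-- `X*_t(f) = sup_{s ∈ [0,t]} ‖f(s-)‖`. -/
def XStar {E : Type*} [NormedAddCommGroup E] (f : ℝ → E) (t : ℝ) : ℝ :=
  sSup ((fun s => ‖lL f s‖) '' Icc 0 t)

/-- The uniform distance of `f` and `g` on `[0,t]`. -/
def unifDist {E : Type*} [NormedAddCommGroup E] (f g : ℝ → E) (t : ℝ) : ℝ :=
  sSup ((fun s => ‖f s - g s‖) '' Icc 0 t)

end

/-- A time change is a continuous, strictly increasing bijection `λ : [0,∞) → [0,∞)`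
with `λ(0) = 0` (formalized for functions `ℝ → ℝ`, with all conditions on `[0,∞)`). -/
structure IsTimeChange (l : ℝ → ℝ) : Prop where
  cont : Continuous l
  mono : StrictMonoOn l (Set.Ici 0)
  zero : l 0 = 0
  surj : ∀ y : ℝ, 0 ≤ y → ∃ s : ℝ, 0 ≤ s ∧ l s = y
section Helpers

variable {E : Type*} [NormedAddCommGroup E] {f : ℝ → E}

/-- left limit tendsto -/
lemma cadlag_tendsto_leftLim (hf : Cadlag f) {u : ℝ} (hu : 0 < u) :
    Tendsto f (nhdsWithin u (Iio u)) (nhds (lL f u)) := by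
  obtain ⟨c, hc⟩ := hf.2 u hu
  have h1 : Function.leftLim f u = c :=
    leftLim_eq_of_tendsto hc
  have : lL f u = c := by rw [lL, if_neg (not_le.mpr hu), h1]
  rw [this]; exact hc

/-- boundedness on compacts -/
lemma cadlag_bounded (hf : Cadlag f) (T : ℝ) :
    ∃ C : ℝ, ∀ s ∈ Icc (0:ℝ) T, ‖f s‖ ≤ C := by
  have := (isCompact_Icc (a := (0:ℝ)) (b := T)).induction_on
    (p := fun u => ∃ C : ℝ, ∀ s ∈ u, ‖f s‖ ≤ C)
    ⟨0, fun s hs => absurd hs (notMem_empty s)⟩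
    (fun s t hst ⟨C, hC⟩ => ⟨C, fun x hx => hC x (hst hx)⟩)
    (fun s t ⟨C, hC⟩ ⟨D, hD⟩ => ⟨max C D, fun x hx => hx.elim
      (fun h => (hC x h).trans (le_max_left _ _))
      (fun h => (hD x h).trans (le_max_right _ _))⟩)
    ?_
  · exact this
  · intro x hx
    rcases eq_or_lt_of_le hx.1 with h0 | h0
    · -- x = 0
      have hr : Tendsto f (nhdsWithin x (Ici x)) (nhds (f x)) := hf.1 x hx.1
      have hev : ∀ᶠ v in nhdsWithin x (Ici x), ‖f v‖ ≤ ‖f x‖ + 1 := by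
        filter_upwards [hr (Metric.closedBall_mem_nhds (f x) one_pos)] with v hv
        have : ‖f v - f x‖ ≤ 1 := by simpa [dist_eq_norm] using hv
        calc ‖f v‖ ≤ ‖f v - f x‖ + ‖f x‖ := by have := norm_sub_norm_le (f v) (f x); linarith
          _ ≤ ‖f x‖ + 1 := by linarith
      refine ⟨{v | ‖f v‖ ≤ ‖f x‖ + 1}, ?_, ⟨‖f x‖ + 1, fun s hs => hs⟩⟩
      exact nhdsWithin_mono x (by rw [← h0]; exact fun v hv => hv.1) hev
    · -- x > 0
      have hr : Tendsto f (nhdsWithin x (Ici x)) (nhds (f x)) := hf.1 x hx.1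
      have hlt : Tendsto f (nhdsWithin x (Iio x)) (nhds (lL f x)) :=
        cadlag_tendsto_leftLim hf h0
      set C := max (‖f x‖ + 1) (‖lL f x‖ + 1) with hCdef
      have hev1 : ∀ᶠ v in nhdsWithin x (Ici x), ‖f v‖ ≤ C := by
        filter_upwards [hr (Metric.closedBall_mem_nhds (f x) one_pos)] with v hv
        have : ‖f v - f x‖ ≤ 1 := by simpa [dist_eq_norm] using hv
        have : ‖f v‖ ≤ ‖f x‖ + 1 := by
          have := norm_sub_norm_le (f v) (f x); linarith
        exact this.trans (le_max_left _ _)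
      have hev2 : ∀ᶠ v in nhdsWithin x (Iio x), ‖f v‖ ≤ C := by
        filter_upwards [hlt (Metric.closedBall_mem_nhds (lL f x) one_pos)] with v hv
        have : ‖f v - lL f x‖ ≤ 1 := by simpa [dist_eq_norm] using hv
        have : ‖f v‖ ≤ ‖lL f x‖ + 1 := by
          have := norm_sub_norm_le (f v) (lL f x); linarith
        exact this.trans (le_max_right _ _)
      have hmem : {v | ‖f v‖ ≤ C} ∈ nhds x := by
        rw [← nhdsLT_sup_nhdsGE x]
        exact mem_sup.mpr ⟨hev2, hev1⟩
      exact ⟨{v | ‖f v‖ ≤ C}, nhdsWithin_le_nhds hmem, ⟨C, fun s hs => hs⟩⟩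

end Helpers
section Helpers2

variable {E : Type*} [NormedAddCommGroup E] {f : ℝ → E}

lemma cadlag_bddAbove_Ico (hf : Cadlag f) (t : ℝ) :
    BddAbove ((fun s => ‖f s‖) '' Ico (0:ℝ) t) := by
  obtain ⟨C, hC⟩ := cadlag_bounded hf t
  exact ⟨C, fun a ⟨s, hs, h⟩ => h ▸ hC s ⟨hs.1, hs.2.le⟩⟩

lemma lL_le_bound (hf : Cadlag f) {C t : ℝ} (hC : ∀ v ∈ Icc (0:ℝ) t, ‖f v‖ ≤ C)
    {s : ℝ} (hs : s ∈ Icc (0:ℝ) t) : ‖lL f s‖ ≤ C := by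
  rcases le_or_gt s 0 with h0 | h0
  · simp only [lL, if_pos h0]
    exact hC 0 ⟨le_refl 0, hs.1.trans hs.2⟩
  · have hlim := cadlag_tendsto_leftLim hf h0
    have hev : ∀ᶠ v in nhdsWithin s (Iio s), ‖f v‖ ≤ C := by
      filter_upwards [Ioo_mem_nhdsLT_of_mem (show s ∈ Ioc (0:ℝ) s from ⟨h0, le_refl s⟩)]
        with v hv
      exact hC v ⟨hv.1.le, hv.2.le.trans hs.2⟩
    exact le_of_tendsto (hlim.norm) hev

lemma cadlag_bddAbove_lL (hf : Cadlag f) (t : ℝ) :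
    BddAbove ((fun s => ‖lL f s‖) '' Icc (0:ℝ) t) := by
  obtain ⟨C, hC⟩ := cadlag_bounded hf t
  exact ⟨C, fun a ⟨s, hs, h⟩ => h ▸ lL_le_bound hf hC hs⟩

lemma xStar_eq (hf : Cadlag f) {t : ℝ} (ht : 0 < t) :
    XStar f t = sSup ((fun s => ‖f s‖) '' Ico (0:ℝ) t) := by
  have hBne : ((fun s => ‖f s‖) '' Ico (0:ℝ) t).Nonempty :=
    ⟨‖f 0‖, 0, ⟨le_refl 0, ht⟩, rfl⟩
  have hAne : ((fun s => ‖lL f s‖) '' Icc (0:ℝ) t).Nonempty :=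
    ⟨‖lL f 0‖, 0, ⟨le_refl 0, ht.le⟩, rfl⟩
  have hBbdd := cadlag_bddAbove_Ico hf t
  have hAbdd := cadlag_bddAbove_lL hf t
  apply le_antisymm
  · apply csSup_le hAne
    rintro a ⟨s, hs, rfl⟩
    rcases le_or_gt s 0 with h0 | h0
    · simp only [lL, if_pos h0]
      exact le_csSup hBbdd ⟨0, ⟨le_refl 0, ht⟩, rfl⟩
    · have hlim := cadlag_tendsto_leftLim hf h0
      have hev : ∀ᶠ v in nhdsWithin s (Iio s), ‖f v‖ ≤ sSup ((fun s => ‖f s‖) '' Ico (0:ℝ) t) := by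
        filter_upwards [Ioo_mem_nhdsLT_of_mem (show s ∈ Ioc (0:ℝ) s from ⟨h0, le_refl s⟩)]
          with v hv
        exact le_csSup hBbdd ⟨v, ⟨hv.1.le, lt_of_lt_of_le hv.2 hs.2⟩, rfl⟩
      exact le_of_tendsto hlim.norm hev
  · apply csSup_le hBne
    rintro b ⟨s, hs, rfl⟩
    have hst : s < t := hs.2
    refine le_of_forall_pos_le_add ?_
    intro ε hε
    obtain ⟨δ, hδ, hδ'⟩ := Metric.tendsto_nhdsWithin_nhds.mp (hf.1 s hs.1) ε hε
    set u := min (s + δ/2) ((s+t)/2) with hu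
    have hsu : s < u := lt_min (by linarith) (by linarith)
    have hut : u < t := lt_of_le_of_lt (min_le_right _ _) (by linarith)
    have hu0 : 0 < u := lt_of_le_of_lt hs.1 hsu
    have hlim := cadlag_tendsto_leftLim hf hu0
    have hkey : ‖lL f u - f s‖ ≤ ε := by
      have hev : ∀ᶠ v in nhdsWithin u (Iio u), ‖f v - f s‖ ≤ ε := by
        filter_upwards [Ioo_mem_nhdsLT_of_mem (show u ∈ Ioc s u from ⟨hsu, le_refl u⟩)]
          with v hv
        have hds : dist v s < δ := by
          rw [Real.dist_eq, abs_of_nonneg (by linarith [hv.1])]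
          have : v < s + δ/2 := lt_of_lt_of_le hv.2 (min_le_left _ _)
          linarith
        have := hδ' (show v ∈ Ici s from hv.1.le) hds
        rw [dist_eq_norm] at this
        exact this.le
      exact le_of_tendsto ((hlim.sub_const (f s)).norm) hev
    have h1 : ‖f s‖ ≤ ‖lL f u‖ + ε := by
      have := norm_sub_norm_le (f s) (lL f u)
      have h2 : ‖f s - lL f u‖ = ‖lL f u - f s‖ := norm_sub_rev _ _
      linarith
    have h3 : ‖lL f u‖ ≤ XStar f t :=
      le_csSup hAbdd ⟨u, ⟨hu0.le, hut.le⟩, rfl⟩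
    linarith

end Helpers2
lemma timeChange_nonneg {l : ℝ → ℝ} (hl : IsTimeChange l) {s : ℝ} (hs : 0 ≤ s) : 0 ≤ l s := by
  rcases eq_or_lt_of_le hs with h | h
  · rw [← h, hl.zero]
  · have := hl.mono (self_mem_Ici) (le_of_lt h : (0:ℝ) ≤ s) h
    rw [hl.zero] at this; exact this.le


/-- If càdlàg `α_n → α` in the Skorokhod sense (via time changes `λ_n` with
`sup_{s ≥ 0} |λ_n(s) − s| → 0` and `sup_{s∈[0,N]} ‖α_n(λ_n(s)) − α(s)‖ → 0` for every `N`),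
and `t > 0` satisfies `α(t) = α(t-)`, then `X*_t(α_n) → X*_t(α)`; consequently
`φ(X*_t(α_n)) → φ(X*_t(α))` for every continuous `φ : ℝ → ℝ`. -/
theorem stmt2 {d : ℕ} (α : ℝ → EuclideanSpace ℝ (Fin d))
    (αn : ℕ → ℝ → EuclideanSpace ℝ (Fin d))
    (hα : Cadlag α) (hαn : ∀ n, Cadlag (αn n))
    (l : ℕ → ℝ → ℝ) (hl : ∀ n, IsTimeChange (l n))
    (hsup1 : ∀ ε : ℝ, 0 < ε → ∃ N : ℕ, ∀ n ≥ N, ∀ s : ℝ, 0 ≤ s → |l n s - s| < ε)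
    (hsup2 : ∀ N : ℕ, ∀ ε : ℝ, 0 < ε → ∃ M : ℕ, ∀ n ≥ M,
      ∀ s ∈ Icc (0 : ℝ) (N : ℝ), ‖αn n (l n s) - α s‖ < ε)
    (t : ℝ) (ht : 0 < t) (hcontpt : α t = lL α t) :
    Tendsto (fun n => XStar (αn n) t) atTop (nhds (XStar α t)) ∧
    ∀ φ : ℝ → ℝ, Continuous φ →
      Tendsto (fun n => φ (XStar (αn n) t)) atTop (nhds (φ (XStar α t))) := by
  have hmain : Tendsto (fun n => XStar (αn n) t) atTop (nhds (XStar α t)) := by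
    rw [Metric.tendsto_atTop]
    intro ε hε
    set M := XStar α t with hM
    have hMeq : M = sSup ((fun s => ‖α s‖) '' Ico (0:ℝ) t) := xStar_eq hα ht
    have hBbdd := cadlag_bddAbove_Ico hα t
    have hαt_le : ‖α t‖ ≤ M := by
      rw [hcontpt]
      exact le_csSup (cadlag_bddAbove_lL hα t) ⟨t, ⟨ht.le, le_refl t⟩, rfl⟩
    obtain ⟨δ0, hδ0pos, hδ0⟩ :=
      Metric.tendsto_nhdsWithin_nhds.mp (hα.1 t ht.le) (ε/4) (by linarith)
    set δ1 := min δ0 1 with hδ1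
    have hδ1pos : 0 < δ1 := lt_min hδ0pos one_pos
    have hδ1le : δ1 ≤ 1 := min_le_right _ _
    -- uniform bound on [0, t + δ1/2)
    have hub : ∀ u ∈ Ico (0:ℝ) (t + δ1/2), ‖α u‖ ≤ M + ε/4 := by
      intro u hu
      rcases lt_or_ge u t with h | h
      · have h1 : ‖α u‖ ≤ sSup ((fun s => ‖α s‖) '' Ico (0:ℝ) t) :=
          le_csSup hBbdd ⟨u, ⟨hu.1, h⟩, rfl⟩
        rw [← hMeq] at h1; linarith
      · have hd : dist u t < δ0 := by
          rw [Real.dist_eq, abs_of_nonneg (by linarith)]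
          have h2 := hu.2
          have h3 : δ1 ≤ δ0 := min_le_left _ _
          linarith
        have h4 := hδ0 (show u ∈ Ici t from h) hd
        rw [dist_eq_norm] at h4
        have h5 := norm_sub_norm_le (α u) (α t)
        linarith
    -- near-sup point
    have hBne : ((fun s => ‖α s‖) '' Ico (0:ℝ) t).Nonempty := ⟨‖α 0‖, 0, ⟨le_refl 0, ht⟩, rfl⟩
    have hlt : M - ε/4 < sSup ((fun s => ‖α s‖) '' Ico (0:ℝ) t) := by rw [← hMeq]; linarith
    obtain ⟨b, ⟨s₀, hs₀, rfl⟩, hb⟩ := exists_lt_of_lt_csSup hBne hlt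
    set δ := min δ1 (t - s₀) / 2 with hδdef
    have hts₀ : 0 < t - s₀ := by have := hs₀.2; linarith
    have hδpos : 0 < δ := by
      have := lt_min hδ1pos hts₀; rw [hδdef]; linarith
    have hδle1 : δ ≤ δ1/2 := by
      have : min δ1 (t - s₀) ≤ δ1 := min_le_left _ _
      rw [hδdef]; linarith
    have hδlt : δ < t - s₀ := by
      have : min δ1 (t - s₀) ≤ t - s₀ := min_le_right _ _
      rw [hδdef]; linarith
    set N : ℕ := ⌈t⌉₊ + 1 with hNdef
    have hNt : t + 1 ≤ (N : ℝ) := by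
      have := Nat.le_ceil t
      push_cast [hNdef]; linarith
    obtain ⟨N1, hN1⟩ := hsup1 δ hδpos
    obtain ⟨N2, hN2⟩ := hsup2 N (ε/4) (by linarith)
    refine ⟨max N1 N2, fun n hn => ?_⟩
    have hn1 := hN1 n (le_trans (le_max_left _ _) hn)
    have hn2 := hN2 n (le_trans (le_max_right _ _) hn)
    have hXn_eq := xStar_eq (hαn n) ht
    -- upper bound
    have hup : XStar (αn n) t ≤ M + ε/2 := by
      rw [hXn_eq]
      have hne : ((fun s => ‖αn n s‖) '' Ico (0:ℝ) t).Nonempty := ⟨‖αn n 0‖, 0, ⟨le_refl 0, ht⟩, rfl⟩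
      apply csSup_le hne
      rintro b ⟨u, hu, rfl⟩
      obtain ⟨s, hs0, hls⟩ := (hl n).surj u hu.1
      have habs := hn1 s hs0
      rw [hls, abs_lt] at habs
      have hsub : s < t + δ := by have := hu.2; linarith [habs.1]
      have hsN : s ∈ Icc (0:ℝ) (N:ℝ) := by
        constructor
        · exact hs0
        · have : δ ≤ 1 := by linarith
          linarith
      have h2 := hn2 s hsN
      rw [hls] at h2
      have h3 : ‖αn n u‖ ≤ ‖α s‖ + ε/4 := by
        have := norm_sub_norm_le (αn n u) (α s); linarith
      have h4 : ‖α s‖ ≤ M + ε/4 := hub s ⟨hs0, by linarith⟩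
      linarith
    -- lower bound
    have hlow : M - ε/2 ≤ XStar (αn n) t := by
      have hs₀N : s₀ ∈ Icc (0:ℝ) (N:ℝ) := ⟨hs₀.1, by have := hs₀.2; linarith⟩
      have h2 := hn2 s₀ hs₀N
      have habs := hn1 s₀ hs₀.1
      rw [abs_lt] at habs
      set u₀ := l n s₀ with hu₀
      have hu₀0 : 0 ≤ u₀ := timeChange_nonneg (hl n) hs₀.1
      have hu₀t : u₀ < t := by linarith [habs.2]
      have h3 : ‖α s₀‖ - ε/4 ≤ ‖αn n u₀‖ := by
        have := norm_sub_norm_le (α s₀) (αn n u₀)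
        rw [norm_sub_rev] at this
        linarith
      have h4 : ‖αn n u₀‖ ≤ XStar (αn n) t := by
        rw [hXn_eq]
        exact le_csSup (cadlag_bddAbove_Ico (hαn n) t) ⟨u₀, ⟨hu₀0, hu₀t⟩, rfl⟩
      linarith
    rw [Real.dist_eq, abs_lt]
    constructor <;> linarith
  exact ⟨hmain, fun φ hφ => ((hφ.tendsto _).comp hmain)⟩
end

section
/- Let g : [0,∞) × ℝ^d → ℝ be continuous, let A : [0,∞) → [0,∞) be continuous and nondecreasing with A(0) = 0, and fix t > 0. Let α and (α_n)_{n∈ℕ} be càdlàg functions [0,∞) → ℝ^d and suppose there exist time changes λ_n with sup_{s≥0} |λ_n(s) − s| → 0 and sup_{s∈[0,N]} ‖α_n(λ_n(s)) − α(s)‖ → 0 for every N ∈ ℕ. Then ∫_{[0,t]} g(s, α_n(s-)) dA(s) → ∫_{[0,t]} g(s, α(s-)) dA(s) as n → ∞, where dA is the Lebesgue–Stieltjes measure associated with A. -/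
open MeasureTheory Filter Set Topology
open scoped ENNReal NNReal

section Aux
variable {F : Type*} [NormedAddCommGroup F] {f : ℝ → F}

lemma cadlag_tendsto_left (hf : Cadlag f) {s : ℝ} (hs : 0 < s) :
    Tendsto f (𝓝[<] s) (𝓝 (Function.leftLim f s)) := by
  obtain ⟨y, hy⟩ := hf.2 s hs
  rwa [leftLim_eq_of_tendsto hy]

lemma cadlag_tendsto_right (hf : Cadlag f) {s : ℝ} (hs : 0 ≤ s) :
    Tendsto f (𝓝[>] s) (𝓝 (f s)) :=
  (hf.1 s hs).mono_left (nhdsWithin_mono s Ioi_subset_Ici_self)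

lemma cadlag_continuousAt (hf : Cadlag f) {s : ℝ} (hs : 0 < s)
    (h : Function.leftLim f s = f s) : ContinuousAt f s := by
  have hL : Tendsto f (𝓝[<] s) (𝓝 (f s)) := h ▸ cadlag_tendsto_left hf hs
  have hR : Tendsto f (𝓝[≥] s) (𝓝 (f s)) := hf.1 s hs.le
  rw [ContinuousAt, ← nhdsLT_sup_nhdsGE s]
  exact tendsto_sup.2 ⟨hL, hR⟩

end Aux

section Aux2
variable {F : Type*} [NormedAddCommGroup F] {f : ℝ → F}

lemma cadlag_countable_jumps (hf : Cadlag f) :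
    Set.Countable {s : ℝ | 0 < s ∧ Function.leftLim f s ≠ f s} := by
  set D := {s : ℝ | 0 < s ∧ Function.leftLim f s ≠ f s} with hD
  have hsub : D ⊆ ⋃ m : ℕ, {s ∈ D | 1 / (m + 1 : ℝ) < dist (f s) (Function.leftLim f s)} := by
    intro s hs
    have hpos : 0 < dist (f s) (Function.leftLim f s) := by
      rw [dist_pos]; exact fun h => hs.2 h.symm
    obtain ⟨m, hm⟩ := exists_nat_one_div_lt hpos
    exact mem_iUnion.2 ⟨m, hs, hm⟩
  refine Set.Countable.mono hsub (Set.countable_iUnion fun m => ?_)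
  set Dm := {s ∈ D | 1 / (m + 1 : ℝ) < dist (f s) (Function.leftLim f s)} with hDm
  set ε3 : ℝ := 1 / (3 * (m + 1)) with hε3
  have hε3pos : 0 < ε3 := by positivity
  -- choose a rational witness for each jump point
  have hch : ∀ s ∈ Dm, ∃ q : ℚ, (q : ℝ) < s ∧
      ∀ u ∈ Ioo (q : ℝ) s, dist (f u) (Function.leftLim f s) < ε3 := by
    intro s hs
    have hT := cadlag_tendsto_left hf hs.1.1
    have hev : ∀ᶠ u in 𝓝[<] s, dist (f u) (Function.leftLim f s) < ε3 :=
      Metric.tendsto_nhds.mp hT ε3 hε3pos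
    obtain ⟨a, ha, hsub'⟩ := mem_nhdsLT_iff_exists_Ioo_subset.1 hev
    obtain ⟨q, hq1, hq2⟩ := exists_rat_btwn (show a < s from ha)
    exact ⟨q, hq2, fun u hu => hsub' ⟨lt_trans hq1 hu.1, hu.2⟩⟩
  choose Q hQlt hQ using hch
  classical
  have key : ∀ (s : ℝ) (hs : s ∈ Dm) (s' : ℝ) (hs' : s' ∈ Dm), Q s hs = Q s' hs' → ¬ s < s' := by
    intro s hs s' hs' hQeq hlt
    set L := Function.leftLim f s
    set L' := Function.leftLim f s'
    have hq : (Q s hs : ℝ) < s := hQlt s hs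
    -- a point in (Q s, s)
    obtain ⟨u, hu⟩ := exists_between hq
    have h1 : dist (f u) L < ε3 := hQ s hs u ⟨hu.1, hu.2⟩
    have h2 : dist (f u) L' < ε3 := by
      have := hQ s' hs' u ⟨by rw [← hQeq]; exact hu.1, lt_trans hu.2 hlt⟩
      exact this
    have hLL' : dist L L' < 2 * ε3 := by
      calc dist L L' ≤ dist L (f u) + dist (f u) L' := dist_triangle _ _ _
        _ < ε3 + ε3 := by rw [dist_comm]; exact add_lt_add h1 h2
        _ = 2 * ε3 := by ring
    -- f s is within ε3 of L'
    have hsL' : dist (f s) L' ≤ ε3 := by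
      have hR := cadlag_tendsto_right hf hs.1.1.le
      have hev : ∀ᶠ u in 𝓝[>] s, dist (f u) L' ≤ ε3 := by
        filter_upwards [Ioo_mem_nhdsGT_of_mem (⟨le_refl s, hlt⟩ : s ∈ Ico s s')] with u hu
        exact (hQ s' hs' u ⟨by rw [← hQeq]; exact lt_trans hq hu.1, hu.2⟩).le
      exact le_of_tendsto (hR.dist tendsto_const_nhds) hev
    have : dist (f s) L < 3 * ε3 := by
      calc dist (f s) L ≤ dist (f s) L' + dist L' L := dist_triangle _ _ _
        _ < ε3 + 2 * ε3 := add_lt_add_of_le_of_lt hsL' (by rwa [dist_comm])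
        _ = 3 * ε3 := by ring
    have h3 : (3 : ℝ) * ε3 = 1 / (m + 1) := by
      rw [hε3]; field_simp
    rw [h3] at this
    exact absurd hs.2 (not_lt.2 this.le)
  have hinj : Set.InjOn (fun s => if h : s ∈ Dm then Q s h else 0) Dm := by
    intro s hs s' hs' h
    simp only [dif_pos hs, dif_pos hs'] at h
    rcases lt_trichotomy s s' with h1 | h1 | h1
    · exact absurd h1 (key s hs s' hs' h)
    · exact h1
    · exact absurd h1 (key s' hs' s hs h.symm)
  exact (Set.mapsTo_univ _ _).countable_of_injOn hinj Set.countable_univ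

end Aux2

section Aux3
variable {F : Type*} [NormedAddCommGroup F] {f : ℝ → F}

lemma cadlag_bddOn (hf : Cadlag f) (N : ℝ) : ∃ C, ∀ s ∈ Icc (0:ℝ) N, ‖f s‖ ≤ C := by
  by_contra h
  push_neg at h
  have h' : ∀ j : ℕ, ∃ s ∈ Icc (0:ℝ) N, (j : ℝ) < ‖f s‖ := fun j => h j
  choose x hx hx' using h'
  obtain ⟨a, ha, φ, hφ, hlim⟩ := isCompact_Icc.tendsto_subseq hx
  have hnorm : Tendsto (fun j => ‖f (x (φ j))‖) atTop atTop := by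
    apply tendsto_atTop_mono (fun j => (hx' (φ j)).le)
    exact tendsto_natCast_atTop_atTop.comp hφ.tendsto_atTop
  by_cases hfreq : ∃ᶠ j in atTop, x (φ j) < a
  · obtain ⟨ψ, hψ, hlt⟩ := Filter.extraction_of_frequently_atTop hfreq
    have ha0 : 0 < a := lt_of_le_of_lt (hx (φ (ψ 0))).1 (hlt 0)
    have htend : Tendsto (fun j => x (φ (ψ j))) atTop (𝓝[<] a) := by
      rw [tendsto_nhdsWithin_iff]
      exact ⟨hlim.comp hψ.tendsto_atTop, Eventually.of_forall hlt⟩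
    have := (cadlag_tendsto_left hf ha0).comp htend
    exact absurd (this.norm) (not_tendsto_nhds_of_tendsto_atTop
      (hnorm.comp hψ.tendsto_atTop) _)
  · rw [Filter.not_frequently] at hfreq
    have htend : Tendsto (fun j => x (φ j)) atTop (𝓝[≥] a) := by
      rw [tendsto_nhdsWithin_iff]
      refine ⟨hlim, ?_⟩
      filter_upwards [hfreq] with j hj
      exact not_lt.1 hj
    have := ((hf.1 a ha.1).mono_left (nhdsWithin_mono a (by rfl))).comp htend
    exact absurd this.norm (not_tendsto_nhds_of_tendsto_atTop hnorm _)

end Aux3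

section Aux4
variable {F : Type*} [NormedAddCommGroup F] [MeasurableSpace F] [BorelSpace F]
  [SecondCountableTopology F] {f : ℝ → F}

lemma cadlag_aestronglyMeasurable (hf : Cadlag f) (μ : Measure ℝ) (t : ℝ) :
    AEStronglyMeasurable f (μ.restrict (Icc 0 t)) := by
  set fk : ℕ → ℝ → F := fun k s => f ((⌊s * 2 ^ k⌋ + 1 : ℤ) / (2 ^ k : ℝ)) with hfk
  have hmeas : ∀ k, AEStronglyMeasurable (fk k) (μ.restrict (Icc 0 t)) := by
    intro k
    have : Measurable (fk k) := by
      have h1 : Measurable fun s : ℝ => ⌊s * 2 ^ k⌋ := (measurable_id.mul_const _).floor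
      exact (measurable_from_top (f := fun m : ℤ => f ((m + 1 : ℤ) / (2 ^ k : ℝ)))).comp h1
    exact this.stronglyMeasurable.aestronglyMeasurable
  refine aestronglyMeasurable_of_tendsto_ae atTop hmeas ?_
  rw [ae_restrict_iff' measurableSet_Icc]
  refine ae_of_all _ fun s hs => ?_
  have hks : ∀ k : ℕ, s < ((⌊s * 2 ^ k⌋ + 1 : ℤ) / (2 ^ k : ℝ)) ∧
      ((⌊s * 2 ^ k⌋ + 1 : ℤ) / (2 ^ k : ℝ)) ≤ s + (1 / 2) ^ k := by
    intro k
    have h2 : (0:ℝ) < 2 ^ k := by positivity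
    constructor
    · rw [lt_div_iff₀ h2]
      push_cast
      exact lt_of_le_of_lt (le_refl _) (by linarith [Int.lt_floor_add_one (s * 2 ^ k)])
    · rw [div_le_iff₀ h2]
      have := Int.floor_le (s * 2 ^ k)
      push_cast
      rw [add_mul, one_div, inv_pow, inv_mul_cancel₀ (ne_of_gt h2)]
      linarith
  have htend : Tendsto (fun k => ((⌊s * 2 ^ k⌋ + 1 : ℤ) / (2 ^ k : ℝ))) atTop (𝓝[Ici s] s) := by
    rw [tendsto_nhdsWithin_iff]
    constructor
    · refine tendsto_of_tendsto_of_tendsto_of_le_of_le (g := fun _ => s)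
        (h := fun k => s + (1/2)^k) tendsto_const_nhds ?_
        (fun k => (hks k).1.le) (fun k => (hks k).2)
      have : Tendsto (fun k : ℕ => (1/2 : ℝ) ^ k) atTop (𝓝 0) :=
        tendsto_pow_atTop_nhds_zero_of_lt_one (by norm_num) (by norm_num)
      simpa using tendsto_const_nhds.add this
    · exact Eventually.of_forall fun k => le_of_lt (hks k).1
  exact (hf.1 s hs.1).tendsto.comp htend

end Aux4

lemma noAtoms_stieltjes (A : StieltjesFunction ℝ) (hA : Continuous A) :
    NoAtoms A.measure := by
  constructor
  intro x
  rw [A.measure_singleton]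
  have h : Function.leftLim A x = A x :=
    leftLim_eq_of_tendsto
      ((hA.tendsto x).mono_left nhdsWithin_le_nhds)
  rw [h, sub_self, ENNReal.ofReal_zero]

section Key
variable {F : Type*} [NormedAddCommGroup F]

lemma key_tendsto {α : ℝ → F} {αn : ℕ → ℝ → F} {l : ℕ → ℝ → ℝ}
    (hα : Cadlag α) (hαn : ∀ n, Cadlag (αn n)) (hl : ∀ n, IsTimeChange (l n))
    (hsup1 : ∀ ε : ℝ, 0 < ε → ∃ N : ℕ, ∀ n ≥ N, ∀ s : ℝ, 0 ≤ s → |l n s - s| < ε)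
    (hsup2 : ∀ N : ℕ, ∀ ε : ℝ, 0 < ε → ∃ M : ℕ, ∀ n ≥ M,
      ∀ s ∈ Icc (0 : ℝ) (N : ℝ), ‖αn n (l n s) - α s‖ < ε)
    {s : ℝ} (hs0 : 0 < s) (hcont : Function.leftLim α s = α s) :
    Tendsto (fun n => lL (αn n) s) atTop (𝓝 (α s)) := by
  have hca : ContinuousAt α s := cadlag_continuousAt hα hs0 hcont
  rw [Metric.tendsto_atTop]
  intro ε hε
  have hε3 : 0 < ε / 3 := by linarith
  obtain ⟨δ0, hδ0, hδ0'⟩ := Metric.continuousAt_iff.1 hca (ε/3) hε3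
  set δ : ℝ := min δ0 (min s 1) with hδ
  have hδpos : 0 < δ := lt_min hδ0 (lt_min hs0 one_pos)
  have hδs : δ ≤ s := le_trans (min_le_right _ _) (min_le_left _ _)
  have hδ1 : δ ≤ 1 := le_trans (min_le_right _ _) (min_le_right _ _)
  have hδδ0 : δ ≤ δ0 := min_le_left _ _
  set Nn : ℕ := ⌈s⌉₊ + 1 with hNn
  obtain ⟨N1, hN1⟩ := hsup1 (δ/2) (by linarith)
  obtain ⟨N2, hN2⟩ := hsup2 Nn (ε/3) hε3
  refine ⟨max N1 N2, fun n hn => ?_⟩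
  have hn1 : n ≥ N1 := le_trans (le_max_left _ _) hn
  have hn2 : n ≥ N2 := le_trans (le_max_right _ _) hn
  -- key estimate on (s - δ/2, s)
  have hest : ∀ u ∈ Ioo (s - δ/2) s, dist (αn n u) (α s) < 2 * (ε/3) := by
    intro u hu
    have hu0 : 0 < u := by
      have : s - δ/2 ≥ s/2 := by linarith
      linarith [hu.1]
    obtain ⟨v, hv0, hvl⟩ := (hl n).surj u hu0.le
    have hvd : |l n v - v| < δ/2 := hN1 n hn1 v hv0
    have hvu : |v - u| < δ/2 := by rw [← hvl] at *; rw [abs_sub_comm]; exact hvd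
    have hvs : |v - s| < δ := by
      have h1 : |u - s| < δ/2 := by
        rw [abs_sub_lt_iff]; constructor <;> [linarith [hu.2]; linarith [hu.1]]
      calc |v - s| = |(v - u) + (u - s)| := by ring_nf
        _ ≤ |v - u| + |u - s| := abs_add_le _ _
        _ < δ/2 + δ/2 := add_lt_add hvu h1
        _ = δ := by ring
    have hvN : v ∈ Icc (0:ℝ) (Nn : ℝ) := by
      constructor
      · exact hv0
      · have : v < s + δ := by
          rw [abs_sub_lt_iff] at hvs; linarith [hvs.1]
        have h2 : s ≤ (⌈s⌉₊ : ℝ) := Nat.le_ceil s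
        have h3 : (Nn : ℝ) = (⌈s⌉₊ : ℝ) + 1 := by rw [hNn]; push_cast; ring
        linarith
    have h4 : ‖αn n (l n v) - α v‖ < ε/3 := hN2 n hn2 v hvN
    have h5 : dist (α v) (α s) < ε/3 := by
      apply hδ0'
      rw [Real.dist_eq]
      exact lt_of_lt_of_le hvs hδδ0
    calc dist (αn n u) (α s) ≤ dist (αn n u) (α v) + dist (α v) (α s) := dist_triangle _ _ _
      _ < ε/3 + ε/3 := by
          refine add_lt_add ?_ h5
          rw [dist_eq_norm, ← hvl]
          exact h4
      _ = 2 * (ε/3) := by ring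
  -- pass to the left limit
  have hLn := cadlag_tendsto_left (hαn n) hs0
  have hev : ∀ᶠ u in 𝓝[<] s, dist (αn n u) (α s) ≤ 2 * (ε/3) := by
    filter_upwards [Ioo_mem_nhdsLT_of_mem (⟨by linarith, le_refl s⟩ : s ∈ Ioc (s - δ/2) s)]
      with u hu
    exact (hest u hu).le
  have hle : dist (Function.leftLim (αn n) s) (α s) ≤ 2 * (ε/3) :=
    le_of_tendsto (hLn.dist tendsto_const_nhds) hev
  have : lL (αn n) s = Function.leftLim (αn n) s := if_neg (not_le.2 hs0)
  rw [this]
  linarith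

end Key


/-- If `g : [0,∞) × ℝ^d → ℝ` is continuous, `A` is a continuous nondecreasing function
with `A(0) = 0` (a continuous Stieltjes function), `t > 0`, and càdlàg `α_n → α` in the
Skorokhod sense via time changes `λ_n`, then
`∫_{[0,t]} g(s, α_n(s-)) dA(s) → ∫_{[0,t]} g(s, α(s-)) dA(s)`. -/
theorem stmt8 {d : ℕ}
    (g : ℝ → EuclideanSpace ℝ (Fin d) → ℝ)
    (hg : ContinuousOn (fun p : ℝ × EuclideanSpace ℝ (Fin d) => g p.1 p.2)
      (Ici 0 ×ˢ univ))
    (A : StieltjesFunction ℝ) (hA : Continuous A) (hA0 : A 0 = 0)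
    (t : ℝ) (ht : 0 < t)
    (α : ℝ → EuclideanSpace ℝ (Fin d))
    (αn : ℕ → ℝ → EuclideanSpace ℝ (Fin d))
    (hα : Cadlag α) (hαn : ∀ n, Cadlag (αn n))
    (l : ℕ → ℝ → ℝ) (hl : ∀ n, IsTimeChange (l n))
    (hsup1 : ∀ ε : ℝ, 0 < ε → ∃ N : ℕ, ∀ n ≥ N, ∀ s : ℝ, 0 ≤ s → |l n s - s| < ε)
    (hsup2 : ∀ N : ℕ, ∀ ε : ℝ, 0 < ε → ∃ M : ℕ, ∀ n ≥ M,
      ∀ s ∈ Icc (0 : ℝ) (N : ℝ), ‖αn n (l n s) - α s‖ < ε) :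
    Tendsto (fun n => ∫ s in Icc (0 : ℝ) t, g s (lL (αn n) s) ∂A.measure) atTop
      (nhds (∫ s in Icc (0 : ℝ) t, g s (lL α s) ∂A.measure)) := by
  classical
  haveI : NullSingletonClass A.measure := noAtoms_stieltjes A hA
  set G : ℝ × EuclideanSpace ℝ (Fin d) → ℝ := fun p => g (max p.1 0) p.2 with hGdef
  have hGc : Continuous G := by
    have h := hg.comp_continuous
      (f := fun p : ℝ × EuclideanSpace ℝ (Fin d) => (max p.1 0, p.2))
      ((continuous_fst.max continuous_const).prodMk continuous_snd)
      (fun p => ⟨show (0:ℝ) ≤ max p.1 0 from le_max_right _ _, mem_univ _⟩)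
    exact h
  have hrw : ∀ f : ℝ → EuclideanSpace ℝ (Fin d),
      (∫ s in Icc (0:ℝ) t, g s (lL f s) ∂A.measure)
        = ∫ s in Icc (0:ℝ) t, G (s, lL f s) ∂A.measure := by
    intro f
    refine (setIntegral_congr_fun measurableSet_Icc fun s hs => ?_).symm
    simp only [hGdef, max_eq_left hs.1]
  simp only [hrw]
  -- a.e. equality of lL f and f on [0,t]
  have hae : ∀ f : ℝ → EuclideanSpace ℝ (Fin d), Cadlag f →
      lL f =ᵐ[A.measure.restrict (Icc (0:ℝ) t)] f := by
    intro f hf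
    have hB : A.measure {s : ℝ | 0 < s ∧ Function.leftLim f s ≠ f s} = 0 :=
      (cadlag_countable_jumps hf).measure_zero _
    have hB' : A.measure.restrict (Icc (0:ℝ) t)
        {s : ℝ | 0 < s ∧ Function.leftLim f s ≠ f s} = 0 :=
      le_antisymm (le_trans (Measure.restrict_le_self _) hB.le) zero_le
    filter_upwards [measure_eq_zero_iff_ae_notMem.1 hB', ae_restrict_mem measurableSet_Icc]
      with s hsB hs
    by_cases h0 : s ≤ 0
    · have hs0 : s = 0 := le_antisymm h0 hs.1
      rw [lL, if_pos h0, hs0]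
    · push_neg at h0
      rw [lL, if_neg (not_le.2 h0)]
      by_contra hne
      exact hsB ⟨h0, hne⟩
  -- measurability
  have hmeas : ∀ n, AEStronglyMeasurable (fun s => G (s, lL (αn n) s))
      (A.measure.restrict (Icc (0:ℝ) t)) := by
    intro n
    have h1 := cadlag_aestronglyMeasurable (hαn n) A.measure t
    have h2 : AEStronglyMeasurable (lL (αn n)) (A.measure.restrict (Icc (0:ℝ) t)) :=
      h1.congr (hae _ (hαn n)).symm
    exact hGc.comp_aestronglyMeasurable (aestronglyMeasurable_id.prodMk h2)
  -- bound
  obtain ⟨R0, hR0⟩ := cadlag_bddOn hα ((⌈t⌉₊ : ℝ) + 1)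
  set R : ℝ := max R0 0 with hRdef
  have hR : ∀ s ∈ Icc (0:ℝ) ((⌈t⌉₊ : ℝ) + 1), ‖α s‖ ≤ R :=
    fun s hs => le_trans (hR0 s hs) (le_max_left _ _)
  obtain ⟨C, hC⟩ := ((isCompact_Icc (a := (0:ℝ)) (b := t)).prod
    (isCompact_closedBall (0 : EuclideanSpace ℝ (Fin d)) (R+1))).exists_bound_of_continuousOn
    (f := G) hGc.continuousOn
  obtain ⟨M1, hM1⟩ := hsup1 1 one_pos
  obtain ⟨M2, hM2⟩ := hsup2 (⌈t⌉₊ + 1) 1 one_pos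
  have hbound : ∀ᶠ n in atTop, ∀ᵐ s ∂(A.measure.restrict (Icc (0:ℝ) t)),
      ‖G (s, lL (αn n) s)‖ ≤ C := by
    rw [eventually_atTop]
    refine ⟨max M1 M2, fun n hn => ?_⟩
    have hn1 : n ≥ M1 := le_trans (le_max_left _ _) hn
    have hn2 : n ≥ M2 := le_trans (le_max_right _ _) hn
    have hval : ∀ u ∈ Icc (0:ℝ) t, ‖αn n u‖ ≤ R + 1 := by
      intro u hu
      obtain ⟨v, hv0, hvl⟩ := (hl n).surj u hu.1
      have hvd : |l n v - v| < 1 := hM1 n hn1 v hv0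
      have hvmem : v ∈ Icc (0:ℝ) ((⌈t⌉₊ + 1 : ℕ) : ℝ) := by
        refine ⟨hv0, ?_⟩
        have h3 : t ≤ (⌈t⌉₊ : ℝ) := Nat.le_ceil t
        have h4 : v < u + 1 := by
          rw [hvl, abs_sub_lt_iff] at hvd; linarith [hvd.2]
        push_cast
        linarith [hu.2]
      have h4 : ‖αn n (l n v) - α v‖ < 1 := hM2 n hn2 v hvmem
      have h5 : ‖α v‖ ≤ R := hR v (by push_cast at hvmem ⊢; exact hvmem)
      have h6 : αn n u = (αn n (l n v) - α v) + α v := by rw [hvl]; abel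
      rw [h6]
      calc ‖(αn n (l n v) - α v) + α v‖ ≤ ‖αn n (l n v) - α v‖ + ‖α v‖ := norm_add_le _ _
        _ ≤ 1 + R := add_le_add h4.le h5
        _ = R + 1 := by ring
    have hlLval : ∀ s ∈ Icc (0:ℝ) t, ‖lL (αn n) s‖ ≤ R + 1 := by
      intro s hs
      by_cases h0 : s ≤ 0
      · rw [lL, if_pos h0]
        exact hval 0 ⟨le_refl 0, ht.le⟩
      · push_neg at h0
        rw [lL, if_neg (not_le.2 h0)]
        have hev : ∀ᶠ u in 𝓝[<] s, ‖αn n u‖ ≤ R + 1 := by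
          filter_upwards [Ioo_mem_nhdsLT_of_mem (⟨h0, le_refl s⟩ : s ∈ Ioc 0 s)] with u hu
          exact hval u ⟨hu.1.le, hu.2.le.trans hs.2⟩
        exact le_of_tendsto (cadlag_tendsto_left (hαn n) h0).norm hev
    rw [ae_restrict_iff' measurableSet_Icc]
    refine ae_of_all _ fun s hs => ?_
    exact hC (s, lL (αn n) s) ⟨hs, mem_closedBall_zero_iff.2 (hlLval s hs)⟩
  -- limit
  have hlim : ∀ᵐ s ∂(A.measure.restrict (Icc (0:ℝ) t)),
      Tendsto (fun n => G (s, lL (αn n) s)) atTop (𝓝 (G (s, lL α s))) := by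
    have hB : A.measure.restrict (Icc (0:ℝ) t)
        {s : ℝ | 0 < s ∧ Function.leftLim α s ≠ α s} = 0 :=
      le_antisymm (le_trans (Measure.restrict_le_self _)
        ((cadlag_countable_jumps hα).measure_zero _).le) zero_le
    have h0 : A.measure.restrict (Icc (0:ℝ) t) {(0:ℝ)} = 0 :=
      le_antisymm (le_trans (Measure.restrict_le_self _)
        (measure_singleton 0).le) zero_le
    filter_upwards [measure_eq_zero_iff_ae_notMem.1 hB, measure_eq_zero_iff_ae_notMem.1 h0,
      ae_restrict_mem measurableSet_Icc] with s hsB hs0 hs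
    have hsne : s ≠ 0 := fun h => hs0 (by rw [h]; exact rfl)
    have hspos : 0 < s := lt_of_le_of_ne hs.1 (Ne.symm hsne)
    have hcont : Function.leftLim α s = α s := by
      by_contra h; exact hsB ⟨hspos, h⟩
    have hk := key_tendsto hα hαn hl hsup1 hsup2 hspos hcont
    have hlLα : lL α s = α s := by rw [lL, if_neg (not_le.2 hspos), hcont]
    rw [hlLα]
    exact (hGc.tendsto _).comp (tendsto_const_nhds.prodMk_nhds hk)
  have hint : Integrable (fun _ : ℝ => C) (A.measure.restrict (Icc (0:ℝ) t)) := by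
    have hfin : A.measure (Icc (0:ℝ) t) < ⊤ := isCompact_Icc.measure_lt_top
    exact integrableOn_const hfin.ne
  exact tendsto_integral_filter_of_dominated_convergence (fun _ => C)
    (Eventually.of_forall hmeas) hbound hint hlim
end

section
/- Let (Ω, F) be a measurable space equipped with a filtration (F^o_t)_{t≥0} of sub-σ-fields of F, let (τ_n)_{n∈ℕ} be (F^o_t)-stopping times, and let P, Q and (P^n)_{n∈ℕ} be probability measures on (Ω, F) such that: (a) P agrees with P^n on the σ-field F^o_{τ_n} for every n; (b) P^n is absolutely continuous with respect to Q for every n; (c) lim_{n→∞} P^n(τ_n ≤ t) = 0 for every t ≥ 0. Then P is locally absolutely continuous with respect to Q: for every t ≥ 0 and every G ∈ F^o_t, Q(G) = 0 implies P(G) = 0. -/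
open MeasureTheory Filter
open scoped ENNReal

/-- Let `(Ω, F)` be a measurable space with a filtration `(F^o_t)_{t≥0}` of sub-σ-fields,
`(τ_n)` stopping times, and `P`, `Q`, `(P^n)` probability measures such that (a) `P`
agrees with `P^n` on `F^o_{τ_n}`, (b) `P^n ≪ Q`, and (c) `P^n(τ_n ≤ t) → 0` for every
`t ≥ 0`. Then `P` is locally absolutely continuous w.r.t. `Q`: for `t ≥ 0` and
`G ∈ F^o_t`, `Q(G) = 0` implies `P(G) = 0`. -/
theorem stmt16 {Ω : Type*} [F : MeasurableSpace Ω]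
    (Fo : ℝ → MeasurableSpace Ω)
    (hFoF : ∀ t : ℝ, 0 ≤ t → Fo t ≤ F)
    (hFo_mono : ∀ s t : ℝ, 0 ≤ s → s ≤ t → Fo s ≤ Fo t)
    (τ : ℕ → Ω → ℝ≥0∞)
    (hτ : ∀ n, ∀ t : ℝ, 0 ≤ t → MeasurableSet[Fo t] {ω | τ n ω ≤ ENNReal.ofReal t})
    (P Q : Measure Ω) (Pn : ℕ → Measure Ω)
    (hP : IsProbabilityMeasure P) (hQ : IsProbabilityMeasure Q)
    (hPn : ∀ n, IsProbabilityMeasure (Pn n))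
    (hagree : ∀ n, ∀ G : Set Ω, MeasurableSet[F] G →
      (∀ t : ℝ, 0 ≤ t → MeasurableSet[Fo t] (G ∩ {ω | τ n ω ≤ ENNReal.ofReal t})) →
      P G = Pn n G)
    (habs : ∀ n, Pn n ≪ Q)
    (hlim : ∀ t : ℝ, 0 ≤ t →
      Tendsto (fun n => Pn n {ω | τ n ω ≤ ENNReal.ofReal t}) atTop (nhds 0)) :
    ∀ t : ℝ, 0 ≤ t → ∀ G : Set Ω, MeasurableSet[Fo t] G → Q G = 0 → P G = 0 := by
  intro t ht G hG hQG
  -- notation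
  have hGF : MeasurableSet[F] G := hFoF t ht G hG
  have hτF : ∀ n, MeasurableSet[F] {ω | τ n ω ≤ ENNReal.ofReal t} :=
    fun n => hFoF t ht _ (hτ n t ht)
  -- P {τ n ≤ t} = Pn n {τ n ≤ t}
  have key1 : ∀ n, P {ω | τ n ω ≤ ENNReal.ofReal t} = Pn n {ω | τ n ω ≤ ENNReal.ofReal t} := by
    intro n
    refine hagree n _ (hτF n) ?_
    intro s hs
    rcases le_or_gt s t with hst | hst
    · have : {ω | τ n ω ≤ ENNReal.ofReal t} ∩ {ω | τ n ω ≤ ENNReal.ofReal s}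
        = {ω | τ n ω ≤ ENNReal.ofReal s} := by
        ext ω
        simp only [Set.mem_inter_iff, Set.mem_setOf_eq, and_iff_right_iff_imp]
        exact fun h => h.trans (ENNReal.ofReal_le_ofReal hst)
      rw [this]; exact hτ n s hs
    · exact MeasurableSet.inter (hFo_mono t s ht hst.le _ (hτ n t ht)) (hτ n s hs)
  -- Pn n G = 0
  have hPnG : ∀ n, Pn n G = 0 := fun n => habs n hQG
  -- P (G ∩ {τ n > t}) = Pn n (G ∩ {τ n > t})
  have key2 : ∀ n, P (G \ {ω | τ n ω ≤ ENNReal.ofReal t})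
      = Pn n (G \ {ω | τ n ω ≤ ENNReal.ofReal t}) := by
    intro n
    refine hagree n _ (hGF.diff (hτF n)) ?_
    intro s hs
    rcases le_or_gt s t with hst | hst
    · have : (G \ {ω | τ n ω ≤ ENNReal.ofReal t}) ∩ {ω | τ n ω ≤ ENNReal.ofReal s}
        = ∅ := by
        ext ω
        simp only [Set.mem_inter_iff, Set.mem_diff, Set.mem_setOf_eq, Set.mem_empty_iff_false,
          iff_false, not_and, and_imp]
        exact fun _ h h' => h (h'.trans (ENNReal.ofReal_le_ofReal hst))
      rw [this]; exact @MeasurableSet.empty Ω (Fo s)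
    · have h1 : MeasurableSet[Fo s] G := hFo_mono t s ht hst.le _ hG
      have h2 : MeasurableSet[Fo s] {ω | τ n ω ≤ ENNReal.ofReal t} :=
        hFo_mono t s ht hst.le _ (hτ n t ht)
      exact (h1.diff h2).inter (hτ n s hs)
  -- bound: P G ≤ Pn n {τ n ≤ t} for each n
  have hbound : ∀ n, P G ≤ Pn n {ω | τ n ω ≤ ENNReal.ofReal t} := by
    intro n
    calc P G ≤ P (G \ {ω | τ n ω ≤ ENNReal.ofReal t}) + P {ω | τ n ω ≤ ENNReal.ofReal t} := by
          refine le_trans (measure_mono ?_) (measure_union_le _ _)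
          intro ω hω
          by_cases h : τ n ω ≤ ENNReal.ofReal t
          · exact Or.inr h
          · exact Or.inl ⟨hω, h⟩
      _ = Pn n (G \ {ω | τ n ω ≤ ENNReal.ofReal t}) + Pn n {ω | τ n ω ≤ ENNReal.ofReal t} := by
          rw [key1 n, key2 n]
      _ ≤ Pn n G + Pn n {ω | τ n ω ≤ ENNReal.ofReal t} :=
          add_le_add (measure_mono Set.diff_subset) le_rfl
      _ = Pn n {ω | τ n ω ≤ ENNReal.ofReal t} := by rw [hPnG n, zero_add]
  have := ge_of_tendsto' (hlim t ht) hbound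
  exact le_antisymm this zero_le
end
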